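/- arXiv:1003.0762 — 11 statements merged into one kernel-verified Lean document; each statement's English description precedes it below -/
import Mathlib

section
/- Let H and K be measurable spaces, let Q be a Markov kernel on the product space H × K, and let R be a Markov kernel on K such that for every (x,h) ∈ H × K the pushforward of the measure Q(x,h) under the second projection H × K → K equals R(h). If ν is a probability measure on H × K that is invariant for Q (i.e. ν.bind Q = ν), then its second marginal λ = ν.map Prod.snd is invariant for R (i.e. λ.bind R = λ). -/
open MeasureTheory ProbabilityTheory

/-- Lemma 3.1: the second marginal of an invariant measure of the enlarged Markov
process `Z = (X, H)` on `H × K` is invariant for the driving kernel `R` on `K`. -/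
theorem second_marginal_invariant
    {H K : Type*} [MeasurableSpace H] [MeasurableSpace K]
    (Q : Kernel (H × K) (H × K)) [IsMarkovKernel Q]
    (R : Kernel K K) [IsMarkovKernel R]
    (hQR : ∀ z : H × K, (Q z).map Prod.snd = R z.2)
    (ν : Measure (H × K)) [IsProbabilityMeasure ν]
    (hν : ν.bind ⇑Q = ν) :
    (ν.map Prod.snd).bind ⇑R = ν.map Prod.snd := by
  ext s hs
  rw [Measure.map_apply measurable_snd hs,
    Measure.bind_apply hs R.measurable.aemeasurable,
    MeasureTheory.lintegral_map (R.measurable_coe hs) measurable_snd]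
  conv_rhs => rw [← hν]
  rw [Measure.bind_apply (measurable_snd hs) Q.measurable.aemeasurable]
  refine lintegral_congr fun z => ?_
  rw [← hQR z, Measure.map_apply measurable_snd hs]
end

section
/- Let H be a metrizable topological space equipped with its Borel σ-algebra and let (P_{s,t})_{s ≤ t, s,t ∈ ℝ} be a two-parameter family of Markov kernels on H satisfying the Chapman–Kolmogorov property. Assume: (strong Feller) for all s < t and every bounded measurable f : H → ℝ, the map x ↦ ∫ f d(P_{s,t}(x)) is continuous on H; (irreducibility) for all s < t, every x ∈ H and every nonempty open set O ⊆ H one has P_{s,t}(x)(O) > 0. Then the family is regular: for all s < t and all x, y ∈ H the probability measures P_{s,t}(x) and P_{s,t}(y) are mutually absolutely continuous. -/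
open MeasureTheory ProbabilityTheory

/-- Proposition 4.1: a two-parameter family of Markov kernels satisfying the
Chapman–Kolmogorov property which is strong Feller and irreducible is regular,
i.e. all transition probabilities from a fixed pair of times are mutually
absolutely continuous. -/
theorem strongFeller_irreducible_regular
    {H : Type*} [TopologicalSpace H] [TopologicalSpace.MetrizableSpace H]
    [MeasurableSpace H] [BorelSpace H]
    (P : ℝ → ℝ → Kernel H H) [∀ s t, IsMarkovKernel (P s t)]
    (hCK : ∀ s r t : ℝ, s ≤ r → r ≤ t → ∀ x : H,
      P s t x = (P s r x).bind ⇑(P r t))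
    (hSF : ∀ s t : ℝ, s < t → ∀ f : H → ℝ, Measurable f → (∃ C : ℝ, ∀ x, |f x| ≤ C) →
      Continuous fun x => ∫ y, f y ∂(P s t x))
    (hIrr : ∀ s t : ℝ, s < t → ∀ x : H, ∀ O : Set H, IsOpen O → O.Nonempty →
      0 < P s t x O) :
    ∀ s t : ℝ, s < t → ∀ x y : H,
      P s t x ≪ P s t y ∧ P s t y ≪ P s t x := by
  intro s t hst x y
  set r := (s + t) / 2 with hr
  have hsr : s < r := by rw [hr]; linarith
  have hrt : r < t := by rw [hr]; linarith
  have key : ∀ u v : H, ∀ A : Set H, MeasurableSet A → P s t u A = 0 → P s t v A = 0 := by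
    intro u v A hA hu
    have hbind : ∀ w : H, P s t w A = ∫⁻ z, P r t z A ∂(P s r w) := by
      intro w
      rw [hCK s r t hsr.le hrt.le w,
        Measure.bind_apply hA (P r t).measurable.aemeasurable]
    have hmeas : Measurable fun z => P r t z A := (P r t).measurable_coe hA
    have hu' : ∫⁻ z, P r t z A ∂(P s r u) = 0 := by rw [← hbind]; exact hu
    have hae : ∀ᵐ z ∂(P s r u), P r t z A = 0 :=
      (lintegral_eq_zero_iff hmeas).mp hu'
    -- the function z ↦ (P r t z A).toReal is continuous by strong Feller
    have hgcont : Continuous fun z => ((P r t z) A).toReal := by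
      have hcont : Continuous fun z => ∫ w, A.indicator (1 : H → ℝ) w ∂(P r t z) := by
        refine hSF r t hrt _ (measurable_one.indicator hA) ⟨1, fun w => ?_⟩
        by_cases hw : w ∈ A <;> simp [hw]
      convert hcont using 2 with z
      rw [integral_indicator_one hA]
      rfl
    -- the set where P r t z A > 0 is open and null, hence empty
    have hN : {z : H | P r t z A ≠ 0} = ∅ := by
      by_contra hne
      obtain ⟨z0, hz0⟩ := Set.nonempty_iff_ne_empty.mpr hne
      have hopen : IsOpen {z : H | P r t z A ≠ 0} := by
        have : {z : H | P r t z A ≠ 0}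
            = (fun z => ((P r t z) A).toReal) ⁻¹' ({0}ᶜ) := by
          ext z
          simp only [Set.mem_setOf_eq, Set.mem_preimage, Set.mem_compl_iff,
            Set.mem_singleton_iff]
          rw [ENNReal.toReal_eq_zero_iff]
          simp [measure_ne_top]
        rw [this]
        exact isOpen_compl_singleton.preimage hgcont
      have hpos := hIrr s r hsr u _ hopen ⟨z0, hz0⟩
      have hzero : P s r u {z : H | P r t z A ≠ 0} = 0 := by
        simpa [ae_iff] using hae
      rw [hzero] at hpos
      exact lt_irrefl _ hpos
    have hall : ∀ z : H, P r t z A = 0 := by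
      intro z
      by_contra hz
      have : z ∈ ({z : H | P r t z A ≠ 0} : Set H) := hz
      rw [hN] at this
      exact this
    rw [hbind v]
    simp [hall]
  have main : ∀ u v : H, P s t u ≪ P s t v := by
    intro u v
    refine Measure.AbsolutelyContinuous.mk fun A hA h0 => key v u A hA h0
  exact ⟨main x y, main y x⟩
end

section
/- Let H be a measurable space and let (P_{s,t})_{s ≤ t, s,t ∈ ℝ} be a two-parameter family of Markov kernels on H satisfying the Chapman–Kolmogorov property which is regular, i.e. for all s < t and all x, y ∈ H the measures P_{s,t}(x) and P_{s,t}(y) are mutually absolutely continuous. Suppose (μ_t)_{t ∈ ℝ} is a family of probability measures on H such that μ_s.bind P_{s,t} = μ_t for all s ≤ t. Then for every s < t and every x ∈ H the measures μ_t and P_{s,t}(x) are mutually absolutely continuous. -/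
open MeasureTheory ProbabilityTheory

/-- Proposition 4.2: an evolutionary system of measures of a regular two-parameter
family of Markov kernels is equivalent to all transition probabilities. -/
theorem evolutionary_system_equivalent_of_regular
    {H : Type*} [MeasurableSpace H]
    (P : ℝ → ℝ → Kernel H H) [∀ s t, IsMarkovKernel (P s t)]
    (hCK : ∀ s r t : ℝ, s ≤ r → r ≤ t → ∀ x : H,
      P s t x = (P s r x).bind ⇑(P r t))
    (hreg : ∀ s t : ℝ, s < t → ∀ x y : H,
      P s t x ≪ P s t y ∧ P s t y ≪ P s t x)
    (μ : ℝ → Measure H) (hμprob : ∀ t, IsProbabilityMeasure (μ t))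
    (hμ : ∀ s t : ℝ, s ≤ t → (μ s).bind ⇑(P s t) = μ t) :
    ∀ s t : ℝ, s < t → ∀ x : H,
      μ t ≪ P s t x ∧ P s t x ≪ μ t := by
  intro s t hst x
  have hbind : μ t = (μ s).bind ⇑(P s t) := (hμ s t hst.le).symm
  have hmeas : Measurable ⇑(P s t) := (P s t).measurable
  constructor
  · refine Measure.AbsolutelyContinuous.mk ?_
    intro A hA hA0
    have h0 : ∀ y, P s t y A = 0 := fun y => (hreg s t hst x y).2 hA0
    rw [hbind, Measure.bind_apply hA hmeas.aemeasurable]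
    simp [h0]
  · refine Measure.AbsolutelyContinuous.mk ?_
    intro A hA hA0
    rw [hbind, Measure.bind_apply hA hmeas.aemeasurable] at hA0
    have hmA : Measurable fun y => P s t y A := (P s t).measurable_coe hA
    have hae : ∀ᵐ y ∂(μ s), P s t y A = 0 :=
      (lintegral_eq_zero_iff hmA).mp hA0
    have hne : (μ s) ≠ 0 := (hμprob s).ne_zero
    have : (MeasureTheory.ae (μ s)).NeBot := ae_neBot.mpr hne
    obtain ⟨y, hy⟩ := hae.exists
    exact (hreg s t hst x y).1 hy
end

section
/- Let H be a standard Borel space and K a measurable space. Let Q be a Markov kernel on H × K and R a Markov kernel on K such that for every (x,h) ∈ H × K the pushforward of Q(x,h) under the second projection equals R(h). Let ν be a Q-invariant probability measure on H × K and let λ = ν.map Prod.snd be its second marginal. Assume: (i) λ is ergodic for R, i.e. every measurable E ⊆ K such that R(h)(E) = 1_E(h) for λ-almost every h satisfies λ(E) = 0 or λ(E) = 1; (ii) for λ-almost every h ∈ K, the measures Q(x,h), x ∈ H, are pairwise mutually absolutely continuous. Then ν is ergodic for Q: every measurable set Γ ⊆ H × K such that Q(z)(Γ) = 1_Γ(z)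 for ν-almost every z ∈ H × K satisfies ν(Γ) = 0 or ν(Γ) = 1. -/
open MeasureTheory ProbabilityTheory
open scoped ENNReal

/-- Theorem 4.3 (kernel formulation): if the driving marginal is ergodic and the
fiber transition probabilities are almost surely pairwise equivalent, then every
invariant measure of the enlarged process is ergodic. -/
theorem invariant_measure_ergodic
    {H K : Type*} [MeasurableSpace H] [StandardBorelSpace H] [MeasurableSpace K]
    (Q : Kernel (H × K) (H × K)) [IsMarkovKernel Q]
    (R : Kernel K K) [IsMarkovKernel R]
    (hQR : ∀ z : H × K, (Q z).map Prod.snd = R z.2)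
    (ν : Measure (H × K)) [IsProbabilityMeasure ν]
    (hν : ν.bind ⇑Q = ν)
    (hR_erg : ∀ E : Set K, MeasurableSet E →
      (∀ᵐ h ∂(ν.map Prod.snd), R h E = E.indicator 1 h) →
      (ν.map Prod.snd) E = 0 ∨ (ν.map Prod.snd) E = 1)
    (hfiber : ∀ᵐ h ∂(ν.map Prod.snd), ∀ x y : H,
      Q (x, h) ≪ Q (y, h)) :
    ∀ Γ : Set (H × K), MeasurableSet Γ →
      (∀ᵐ z ∂ν, Q z Γ = Γ.indicator 1 z) →
      ν Γ = 0 ∨ ν Γ = 1 := by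
  intro Γ hΓ hΓinv
  haveI : Nonempty (H × K) := by
    by_contra hne
    rw [not_nonempty_iff] at hne
    have h1 := measure_univ (μ := ν)
    rw [Set.univ_eq_empty_iff.mpr hne, measure_empty] at h1
    exact zero_ne_one h1
  haveI : Nonempty H := ⟨(Classical.arbitrary (H × K)).1⟩
  set μK : Measure K := ν.map Prod.snd with hμKdef
  haveI : IsProbabilityMeasure μK := Measure.isProbabilityMeasure_map measurable_snd.aemeasurable
  set ρ : Measure (K × H) := ν.map Prod.swap with hρdef
  haveI : IsProbabilityMeasure ρ := Measure.isProbabilityMeasure_map measurable_swap.aemeasurable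
  have hρfst : ρ.fst = μK := by
    rw [hρdef, hμKdef, Measure.fst, Measure.map_map measurable_fst measurable_swap]
    rfl
  set κ : Kernel K H := ρ.condKernel with hκdef
  haveI : IsMarkovKernel κ := by rw [hκdef]; infer_instance
  have hdis : ρ.fst ⊗ₘ κ = ρ := by rw [hκdef]; exact ρ.disintegrate _
  have hνρ : ν = ρ.map Prod.swap := by
    rw [hρdef, Measure.map_map measurable_swap measurable_swap]
    simp
  -- the swapped set and its sections
  have hΓ' : MeasurableSet (Prod.swap ⁻¹' Γ : Set (K × H)) := hΓ.preimage measurable_swap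
  set f : K → ℝ≥0∞ := fun h => κ h (Prod.mk h ⁻¹' (Prod.swap ⁻¹' Γ)) with hfdef
  have hfmeas : Measurable f := Kernel.measurable_kernel_prodMk_left hΓ'
  have hsec : ∀ h : K, MeasurableSet (Prod.mk h ⁻¹' (Prod.swap ⁻¹' Γ)) :=
    fun h => hΓ'.preimage measurable_prodMk_left
  -- Lemma A : computing ν S via the disintegration
  have hA : ∀ S : Set (H × K), MeasurableSet S →
      ν S = ∫⁻ h, κ h (Prod.mk h ⁻¹' (Prod.swap ⁻¹' S)) ∂μK := by
    intro S hS
    have h1 : ρ (Prod.swap ⁻¹' S) = ν S := by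
      rw [hρdef, Measure.map_apply measurable_swap (hS.preimage measurable_swap),
        Set.preimage_preimage]
      simp
    rw [← h1, ← hdis, Measure.compProd_apply (hS.preimage measurable_swap), hρfst]
  -- ν Γ = ∫ f
  have hA1 : ν Γ = ∫⁻ h, f h ∂μK := hA Γ hΓ
  -- a.e. fiberwise harmonicity
  have hmeasP : MeasurableSet {z : H × K | Q z Γ = Γ.indicator 1 z} := by
    exact MeasureTheory.StronglyMeasurable.measurableSet_eq_fun
      (Q.measurable_coe hΓ).stronglyMeasurable
      (Measurable.stronglyMeasurable (f := Γ.indicator (1 : H × K → ℝ≥0∞))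
        (measurable_const.indicator hΓ))
  have hae1 : ∀ᵐ p ∂ρ, Q (p.2, p.1) Γ = Γ.indicator 1 (p.2, p.1) := by
    rw [hρdef]
    refine (ae_map_iff measurable_swap.aemeasurable
      (p := fun q : K × H => Q (q.2, q.1) Γ = Γ.indicator 1 (q.2, q.1))
      (hmeasP.preimage measurable_swap)).mpr ?_
    filter_upwards [hΓinv] with z hz
    exact hz
  have hae2 : ∀ᵐ h ∂μK, ∀ᵐ x ∂κ h, Q (x, h) Γ = Γ.indicator 1 (x, h) := by
    rw [← hρfst]
    exact Measure.ae_ae_of_ae_compProd (by rw [hdis]; exact hae1)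
  -- Lemma C : f is a.e. {0,1}-valued
  have hae01 : ∀ᵐ h ∂μK, f h = 0 ∨ f h = 1 := by
    filter_upwards [hae2, hfiber] with h hh hab
    by_contra hC
    push_neg at hC
    obtain ⟨h0, h1⟩ := hC
    have hAc : κ h {x : H | ¬ Q (x, h) Γ = Γ.indicator 1 (x, h)} = 0 := by
      rw [← ae_iff]; exact hh
    -- pick x in the section where the invariance equation holds
    have hx : (Prod.mk h ⁻¹' (Prod.swap ⁻¹' Γ) ∩
        {x : H | Q (x, h) Γ = Γ.indicator 1 (x, h)}).Nonempty := by
      rw [Set.nonempty_iff_ne_empty]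
      intro hemp
      apply h0
      refine measure_mono_null ?_ hAc
      intro x hxmem
      by_contra hxc
      simp only [Set.mem_setOf_eq, not_not] at hxc
      exact Set.eq_empty_iff_forall_notMem.mp hemp x ⟨hxmem, hxc⟩
    have hy : ((Prod.mk h ⁻¹' (Prod.swap ⁻¹' Γ))ᶜ ∩
        {x : H | Q (x, h) Γ = Γ.indicator 1 (x, h)}).Nonempty := by
      have hco : κ h ((Prod.mk h ⁻¹' (Prod.swap ⁻¹' Γ))ᶜ) ≠ 0 := by
        intro hc
        exact h1 ((prob_compl_eq_zero_iff (hsec h)).mp hc)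
      rw [Set.nonempty_iff_ne_empty]
      intro hemp
      apply hco
      refine measure_mono_null ?_ hAc
      intro x hxmem
      by_contra hxc
      simp only [Set.mem_setOf_eq, not_not] at hxc
      exact Set.eq_empty_iff_forall_notMem.mp hemp x ⟨hxmem, hxc⟩
    obtain ⟨x, hxΓ, hxeq⟩ := hx
    obtain ⟨y, hyΓ, hyeq⟩ := hy
    have hxΓ' : (x, h) ∈ Γ := hxΓ
    have hyΓ' : (y, h) ∉ Γ := hyΓ
    have hx1 : Q (x, h) Γ = 1 := by
      rw [hxeq, Set.indicator_of_mem hxΓ']; rfl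
    have hy0 : Q (y, h) Γ = 0 := by
      rw [hyeq, Set.indicator_of_notMem hyΓ']
    have := hab x y hy0
    rw [hx1] at this
    exact one_ne_zero this
  -- the invariant base set E
  set E : Set K := f ⁻¹' {1} with hEdef
  have hE : MeasurableSet E := hfmeas (measurableSet_singleton 1)
  have hfE : f =ᵐ[μK] E.indicator 1 := by
    filter_upwards [hae01] with h h01
    rcases h01 with h0 | h1
    · have : h ∉ E := by simp [hEdef, h0]
      rw [Set.indicator_of_notMem this, h0]
    · have : h ∈ E := by simp [hEdef, h1]
      rw [Set.indicator_of_mem this, h1]; rfl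
  have hνΓE : ν Γ = μK E := by
    rw [hA1, lintegral_congr_ae hfE, lintegral_indicator_one hE]
  -- invariance of the marginal μK under R
  have hbindR : ∀ B : Set K, MeasurableSet B → ∫⁻ h, R h B ∂μK = μK B := by
    intro B hB
    have h1 : ∫⁻ h, R h B ∂μK = ∫⁻ z, R z.2 B ∂ν :=
      lintegral_map (R.measurable_coe hB) measurable_snd
    have h2 : ∀ z : H × K, R z.2 B = Q z (Prod.snd ⁻¹' B) := by
      intro z
      rw [← hQR z, Measure.map_apply measurable_snd hB]
    have h3 : ∫⁻ z, Q z (Prod.snd ⁻¹' B) ∂ν = ν (Prod.snd ⁻¹' B) := by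
      conv_rhs => rw [← hν]
      rw [Measure.bind_apply (hB.preimage measurable_snd) (Kernel.measurable Q).aemeasurable]
    rw [h1]
    simp_rw [h2]
    rw [h3, hμKdef, Measure.map_apply measurable_snd hB]
  -- key identity: μK (E ∩ B) = ∫⁻ h in E, R h B ∂μK
  have hkey : ∀ B : Set K, MeasurableSet B →
      μK (E ∩ B) = ∫⁻ h in E, R h B ∂μK := by
    intro B hB
    set S : Set (H × K) := Γ ∩ Prod.snd ⁻¹' B with hSdef
    have hSmeas : MeasurableSet S := hΓ.inter (hB.preimage measurable_snd)
    -- LHS computation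
    have hL : ν S = μK (E ∩ B) := by
      rw [hA S hSmeas]
      have hsecS : ∀ h : K, κ h (Prod.mk h ⁻¹' (Prod.swap ⁻¹' S)) = B.indicator f h := by
        intro h
        by_cases hhB : h ∈ B
        · rw [Set.indicator_of_mem hhB]
          congr 1
          ext x
          simp [hSdef, hhB]
        · rw [Set.indicator_of_notMem hhB]
          convert measure_empty (μ := κ h)
          ext x
          simp [hSdef, hhB]
      simp_rw [hsecS]
      have : B.indicator f =ᵐ[μK] (E ∩ B).indicator 1 := by
        filter_upwards [hfE] with h hh
        by_cases hhB : h ∈ B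
        · rw [Set.indicator_of_mem hhB, hh]
          by_cases hhE : h ∈ E
          · rw [Set.indicator_of_mem hhE, Set.indicator_of_mem (Set.mem_inter hhE hhB)]
          · rw [Set.indicator_of_notMem hhE,
              Set.indicator_of_notMem (fun hc => hhE hc.1)]
        · rw [Set.indicator_of_notMem hhB,
            Set.indicator_of_notMem (fun hc => hhB hc.2)]
      rw [lintegral_congr_ae this, lintegral_indicator_one (hE.inter hB)]
    -- RHS computation
    have hmg : Measurable fun z : H × K => R z.2 B :=
      (R.measurable_coe hB).comp measurable_snd
    have hR1 : ν S = ∫⁻ z, Γ.indicator (fun z : H × K => R z.2 B) z ∂ν := by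
      conv_lhs => rw [← hν]
      rw [Measure.bind_apply hSmeas (Kernel.measurable Q).aemeasurable]
      refine lintegral_congr_ae ?_
      filter_upwards [hΓinv] with z hz
      by_cases hzΓ : z ∈ Γ
      · rw [Set.indicator_of_mem hzΓ]
        have hzc : Q z Γᶜ = 0 := by
          rw [prob_compl_eq_zero_iff hΓ, hz, Set.indicator_of_mem hzΓ]; rfl
        rw [hSdef, Set.inter_comm, measure_inter_conull hzc, ← hQR z,
          Measure.map_apply measurable_snd hB]
      · rw [Set.indicator_of_notMem hzΓ]
        have hz0 : Q z Γ = 0 := by rw [hz, Set.indicator_of_notMem hzΓ]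
        exact measure_mono_null Set.inter_subset_left hz0
    have hR2 : ∫⁻ z, Γ.indicator (fun z : H × K => R z.2 B) z ∂ν
        = ∫⁻ h, R h B * f h ∂μK := by
      have hfmsw : Measurable fun p : K × H =>
          Γ.indicator (fun z : H × K => R z.2 B) p.swap :=
        (hmg.indicator hΓ).comp measurable_swap
      rw [hνρ, lintegral_map (hmg.indicator hΓ) measurable_swap, ← hdis, hρfst,
        Measure.lintegral_compProd hfmsw]
      refine lintegral_congr fun h => ?_
      have : (fun x : H => Γ.indicator (fun z : H × K => R z.2 B) (Prod.swap (h, x)))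
          = (Prod.mk h ⁻¹' (Prod.swap ⁻¹' Γ)).indicator (fun _ => R h B) := by
        funext x
        simp only [Prod.swap_prod_mk]
        by_cases hx : (x, h) ∈ Γ
        · rw [Set.indicator_of_mem hx]
          exact (Set.indicator_of_mem
            (show x ∈ Prod.mk h ⁻¹' (Prod.swap ⁻¹' Γ) from hx) (fun _ : H => R h B)).symm
        · rw [Set.indicator_of_notMem hx]
          exact (Set.indicator_of_notMem
            (show x ∉ Prod.mk h ⁻¹' (Prod.swap ⁻¹' Γ) from hx) (fun _ : H => R h B)).symm
      rw [this, lintegral_indicator_const (hsec h)]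
    have hR3 : ∫⁻ h, R h B * f h ∂μK = ∫⁻ h in E, R h B ∂μK := by
      rw [← lintegral_indicator hE fun h => R h B]
      refine lintegral_congr_ae ?_
      filter_upwards [hfE] with h hh
      rw [hh]
      by_cases hhE : h ∈ E
      · rw [Set.indicator_of_mem hhE, Set.indicator_of_mem hhE, Pi.one_apply, mul_one]
      · rw [Set.indicator_of_notMem hhE, Set.indicator_of_notMem hhE, mul_zero]
    rw [← hL, hR1, hR2, hR3]
  -- R h E = 1 a.e. on E
  have honE : ∀ᵐ h ∂μK, h ∈ E → R h Eᶜ = 0 := by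
    have h0 : ∫⁻ h in E, R h Eᶜ ∂μK = 0 := by
      rw [← hkey Eᶜ hE.compl]
      simp
    rw [lintegral_eq_zero_iff (R.measurable_coe hE.compl)] at h0
    have := ae_restrict_iff' hE |>.mp h0
    filter_upwards [this] with h hh hhE
    exact hh hhE
  -- R h E = 0 a.e. on Eᶜ
  have honEc : ∀ᵐ h ∂μK, h ∉ E → R h E = 0 := by
    have hsplit : ∫⁻ h in E, R h E ∂μK + ∫⁻ h in Eᶜ, R h E ∂μK = ∫⁻ h, R h E ∂μK :=
      lintegral_add_compl _ hE
    have h1 : ∫⁻ h in E, R h E ∂μK = μK E := by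
      rw [← hkey E hE, Set.inter_self]
    have h2 : ∫⁻ h, R h E ∂μK = μK E := hbindR E hE
    have h0 : ∫⁻ h in Eᶜ, R h E ∂μK = 0 := by
      have hfin : μK E ≠ ⊤ := measure_ne_top _ _
      rw [h1, h2] at hsplit
      refine (ENNReal.add_right_inj hfin).mp ?_
      rw [add_zero]
      exact hsplit
    rw [lintegral_eq_zero_iff (R.measurable_coe hE)] at h0
    have := ae_restrict_iff' hE.compl |>.mp h0
    filter_upwards [this] with h hh hhE
    exact hh hhE
  -- conclude
  have hEinv : ∀ᵐ h ∂μK, R h E = E.indicator 1 h := by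
    filter_upwards [honE, honEc] with h h1 h2
    by_cases hhE : h ∈ E
    · rw [Set.indicator_of_mem hhE]
      simpa using (prob_compl_eq_zero_iff hE).mp (h1 hhE)
    · rw [Set.indicator_of_notMem hhE]
      exact h2 hhE
  rcases hR_erg E hE hEinv with h | h
  · left; rw [hνΓE]; exact h
  · right; rw [hνΓE]; exact h
end

section
/- Let K and H be measurable spaces, let λ be a probability measure on K, and let κ¹ and κ² be Markov kernels from K to H. Let ν¹ and ν² be the probability measures on K × H given by νⁱ(A) = ∫_K κⁱ(h)({x ∈ H : (h,x) ∈ A}) dλ(h) (i.e. νⁱ = λ ⊗ₘ κⁱ, the composition product). If ν¹ and ν² are mutually singular, then for λ-almost every h ∈ K the measures κ¹(h) and κ²(h) are mutually singular. -/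
open MeasureTheory ProbabilityTheory

/-- Lemma 5.5: if the composition products `λ ⊗ₘ κ¹` and `λ ⊗ₘ κ²` of a probability
measure `λ` with two Markov kernels are mutually singular, then the kernels are
`λ`-almost surely mutually singular. -/
theorem fibers_mutually_singular
    {K H : Type*} [MeasurableSpace K] [MeasurableSpace H]
    (lam : Measure K) [IsProbabilityMeasure lam]
    (κ₁ κ₂ : Kernel K H) [IsMarkovKernel κ₁] [IsMarkovKernel κ₂]
    (hsing : (lam ⊗ₘ κ₁) ⟂ₘ (lam ⊗ₘ κ₂)) :
    ∀ᵐ h ∂lam, κ₁ h ⟂ₘ κ₂ h := by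
  obtain ⟨S, hS, h1, h2⟩ := hsing
  rw [Measure.compProd_apply hS,
    lintegral_eq_zero_iff (Kernel.measurable_kernel_prodMk_left hS)] at h1
  rw [Measure.compProd_apply hS.compl,
    lintegral_eq_zero_iff (Kernel.measurable_kernel_prodMk_left hS.compl)] at h2
  filter_upwards [h1, h2] with h h1 h2
  refine ⟨Prod.mk h ⁻¹' S, measurable_prodMk_left hS, ?_, ?_⟩
  · simpa using h1
  · simpa using h2
end

section
/- Let (Ω, ℱ, P) be a probability space with a filtration (ℱ_k)_{k ∈ ℕ} and let (V_k)_{k ∈ ℕ} be a nonnegative integrable real-valued process adapted to (ℱ_k). Assume there are constants γ ∈ (0,1) and c ≥ 0 such that for every k ∈ ℕ, E[V_{k+1} | ℱ_k] ≤ γ V_k + c almost surely. For M > 0 set τ_M = inf{k ∈ ℕ : V_k ≤ M} (with inf ∅ = ∞). Then there exist M₀ > 0 and a constant C > 0, depending only on γ and c, such that for every M ≥ M₀ and every k ∈ ℕ: P(τ_M ≥ k) ≤ C γ^{k/2} (1 + E[V_0]). -/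
open MeasureTheory ProbabilityTheory

/-- Lemma 6.1, polynomial estimate (6.3): under a geometric Lyapunov drift condition,
the return time `τ_M = inf{k : V_k ≤ M}` to a sufficiently large sublevel set has
exponentially decaying tails: `P(τ_M ≥ k) ≤ C γ^{k/2} (1 + E[V₀])`.  The event
`{τ_M ≥ k}` is written as `{ω | ∀ j < k, M < V j ω}`. -/
theorem return_time_tail_estimate
    {Ω : Type*} {m : MeasurableSpace Ω} {μ : Measure Ω} [IsProbabilityMeasure μ]
    (ℱ : Filtration ℕ m) (V : ℕ → Ω → ℝ)
    (hV_nonneg : ∀ k ω, 0 ≤ V k ω)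
    (hV_int : ∀ k, Integrable (V k) μ)
    (hV_adapted : Adapted ℱ V)
    (γ c : ℝ) (hγ : γ ∈ Set.Ioo (0 : ℝ) 1) (hc : 0 ≤ c)
    (hdrift : ∀ k, μ[V (k + 1) | ℱ k] ≤ᵐ[μ] fun ω => γ * V k ω + c) :
    ∃ M₀ > (0 : ℝ), ∃ C > (0 : ℝ), ∀ M ≥ M₀, ∀ k : ℕ,
      (μ {ω | ∀ j < k, M < V j ω}).toReal ≤
        C * γ ^ ((k : ℝ) / 2) * (1 + ∫ ω, V 0 ω ∂μ) := by
  obtain ⟨hγ0, hγ1⟩ := hγ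
  set γ' := Real.sqrt γ with hγ'def
  have hγ'0 : 0 < γ' := Real.sqrt_pos.2 hγ0
  have hγ'sq : γ' * γ' = γ := Real.mul_self_sqrt hγ0.le
  have hγ'1 : γ' < 1 := by nlinarith
  have hγγ' : γ < γ' := by nlinarith
  set M₀ : ℝ := max 1 (c / (γ' - γ)) with hM₀def
  have hM₀1 : (1 : ℝ) ≤ M₀ := le_max_left _ _
  refine ⟨M₀, lt_of_lt_of_le one_pos hM₀1, 1 / γ', by positivity, ?_⟩
  intro M hM k
  have hM1 : (1 : ℝ) ≤ M := le_trans hM₀1 hM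
  have hE0 : 0 ≤ ∫ ω, V 0 ω ∂μ := integral_nonneg (hV_nonneg 0)
  set E0 : ℝ := ∫ ω, V 0 ω ∂μ with hE0def
  set S : ℕ → Set Ω := fun n => {ω | ∀ j < n, M < V j ω} with hSdef
  have hVmeas : ∀ j, Measurable (V j) := fun j =>
    ((hV_adapted j)).mono (ℱ.le j) le_rfl
  have hS : ∀ k : ℕ, MeasurableSet[ℱ k] (S (k + 1)) := by
    intro k
    have hrw : S (k + 1) = ⋂ j ∈ Finset.range (k + 1), {ω | M < V j ω} := by
      ext ω; simp [hSdef, Nat.lt_succ_iff, Set.mem_iInter]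
    rw [hrw]
    refine MeasurableSet.biInter (Set.to_countable _) fun j hj => ?_
    have hj' : j ≤ k := Nat.lt_succ_iff.mp (Finset.mem_range.mp hj)
    exact ℱ.mono hj' _ (measurableSet_lt measurable_const (hV_adapted j))
  have hSm : ∀ n, MeasurableSet (S n) := by
    intro n
    cases n with
    | zero => simp [hSdef]
    | succ k => exact ℱ.le k _ (hS k)
  have hSsub : ∀ n, S (n + 1) ⊆ S n := fun n ω h j hj => h j (Nat.lt_succ_of_lt hj)
  have hSmem : ∀ n ω, ω ∈ S (n + 1) → M < V n ω := fun n ω h => h n (Nat.lt_succ_self n)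
  set a : ℕ → ℝ := fun n => ∫ ω in S n, V n ω ∂μ with hadef
  -- Key drift step
  have hkey : ∀ k : ℕ, a (k + 1) ≤ γ' * a k := by
    intro k
    have h1 : a (k + 1) = ∫ ω in S (k + 1), (μ[V (k + 1)|ℱ k]) ω ∂μ :=
      (setIntegral_condExp (ℱ.le k) (hV_int (k + 1)) (hS k)).symm
    have h2 : ∫ ω in S (k + 1), (μ[V (k + 1)|ℱ k]) ω ∂μ
        ≤ ∫ ω in S (k + 1), (γ * V k ω + c) ∂μ := by
      refine setIntegral_mono_ae (integrable_condExp.integrableOn)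
        (((hV_int k).const_mul γ).add (integrable_const c)).integrableOn ?_
      exact hdrift k
    have h3 : ∫ ω in S (k + 1), (γ * V k ω + c) ∂μ
        ≤ ∫ ω in S (k + 1), γ' * V k ω ∂μ := by
      refine setIntegral_mono_on
        (((hV_int k).const_mul γ).add (integrable_const c)).integrableOn
        ((hV_int k).const_mul γ').integrableOn (hSm (k + 1)) ?_
      intro ω hω
      have hVω : M < V k ω := hSmem k ω hω
      have hc' : c / (γ' - γ) ≤ M₀ := le_max_right _ _
      have hcM : c ≤ (γ' - γ) * M := by
        rw [div_le_iff₀ (by linarith)] at hc'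
        nlinarith
      nlinarith
    have h4 : ∫ ω in S (k + 1), γ' * V k ω ∂μ = γ' * ∫ ω in S (k + 1), V k ω ∂μ :=
      integral_const_mul γ' _
    have h5 : ∫ ω in S (k + 1), V k ω ∂μ ≤ a k := by
      refine setIntegral_mono_set (hV_int k).integrableOn
        (Filter.Eventually.of_forall fun ω => hV_nonneg k ω) ?_
      exact Filter.Eventually.of_forall (hSsub k)
    calc a (k + 1) = ∫ ω in S (k + 1), (μ[V (k + 1)|ℱ k]) ω ∂μ := h1
      _ ≤ ∫ ω in S (k + 1), (γ * V k ω + c) ∂μ := h2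
      _ ≤ ∫ ω in S (k + 1), γ' * V k ω ∂μ := h3
      _ = γ' * ∫ ω in S (k + 1), V k ω ∂μ := h4
      _ ≤ γ' * a k := by nlinarith [h5]
  have ha : ∀ k : ℕ, a k ≤ γ' ^ k * E0 := by
    intro k
    induction k with
    | zero =>
      have : S 0 = Set.univ := by ext ω; simp [hSdef]
      simp [hadef, this, hE0def]
    | succ n ih =>
      calc a (n + 1) ≤ γ' * a n := hkey n
        _ ≤ γ' * (γ' ^ n * E0) := by nlinarith
        _ = γ' ^ (n + 1) * E0 := by ring
  have hpow : ∀ k : ℕ, γ ^ ((k : ℝ) / 2) = γ' ^ k := by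
    intro k
    rw [hγ'def, Real.sqrt_eq_rpow, ← Real.rpow_natCast (γ ^ (1 / 2 : ℝ)) k,
      ← Real.rpow_mul hγ0.le]
    congr 1; ring
  rw [show {ω | ∀ j < k, M < V j ω} = S k from rfl, hpow k]
  cases k with
  | zero =>
    have hsu : S 0 = Set.univ := by ext ω; simp [hSdef]
    rw [hsu]
    simp only [measure_univ, ENNReal.toReal_one, pow_zero, mul_one]
    have h1γ' : 1 ≤ 1 / γ' := by
      rw [le_div_iff₀ hγ'0]; linarith
    nlinarith
  | succ n =>
    have hfin : (μ (S (n + 1))).toReal * M ≤ a n := by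
      have e1 : ∫ _ω in S (n + 1), M ∂μ = (μ (S (n + 1))).toReal * M := by
        rw [setIntegral_const]; simp [smul_eq_mul, Measure.real]
      have e2 : ∫ _ω in S (n + 1), M ∂μ ≤ ∫ ω in S (n + 1), V n ω ∂μ := by
        refine setIntegral_mono_on (integrableOn_const (measure_lt_top μ _).ne)
          (hV_int n).integrableOn (hSm (n + 1)) fun ω hω => (hSmem n ω hω).le
      have e3 : ∫ ω in S (n + 1), V n ω ∂μ ≤ a n := by
        refine setIntegral_mono_set (hV_int n).integrableOn
          (Filter.Eventually.of_forall fun ω => hV_nonneg n ω)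
          (Filter.Eventually.of_forall (hSsub n))
      linarith [e1, e2, e3]
    have hμ0 : 0 ≤ (μ (S (n + 1))).toReal := ENNReal.toReal_nonneg
    have hμa : (μ (S (n + 1))).toReal ≤ γ' ^ n * E0 := by
      have := ha n
      nlinarith
    have hexp : γ' ^ n * E0 = (1 / γ') * γ' ^ (n + 1) * E0 := by
      field_simp; ring
    have hγ'pow : 0 ≤ γ' ^ (n + 1) := by positivity
    calc (μ (S (n + 1))).toReal ≤ γ' ^ n * E0 := hμa
      _ = (1 / γ') * γ' ^ (n + 1) * E0 := hexp
      _ ≤ (1 / γ') * γ' ^ (n + 1) * (1 + E0) := by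
          have : (0:ℝ) ≤ (1 / γ') * γ' ^ (n + 1) := by positivity
          nlinarith
end

section
/- Let (Ω, ℱ, P) be a probability space with a filtration (ℱ_k)_{k ∈ ℕ} and let (V_k)_{k ∈ ℕ} be a nonnegative integrable real-valued process adapted to (ℱ_k) such that for constants γ ∈ (0,1) and c ≥ 0 one has E[V_{k+1} | ℱ_k] ≤ γ V_k + c almost surely for every k. For M > 0 set τ_M = inf{k ∈ ℕ : V_k ≤ M}. Then for every α > 0 with e^{2α} γ < 1 there exist M₀ > 0 and a constant C(α) > 0, depending only on α, γ and c, such that for every M ≥ M₀: τ_M < ∞ almost surely and E[e^{α τ_M}] ≤ C(α) (1 + E[V_0]). -/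
open MeasureTheory ProbabilityTheory

set_option maxHeartbeats 1000000 in
/-- Lemma 6.1, exponential-moment estimate (6.4): under a geometric Lyapunov drift
condition, for every `α > 0` with `e^{2α} γ < 1` and every sufficiently large `M`,
the return time `τ_M = inf{k : V_k ≤ M}` is almost surely finite and satisfies
`E[e^{α τ_M}] ≤ C(α) (1 + E[V₀])`. -/
theorem return_time_exponential_moment
    {Ω : Type*} {m : MeasurableSpace Ω} {μ : Measure Ω} [IsProbabilityMeasure μ]
    (ℱ : Filtration ℕ m) (V : ℕ → Ω → ℝ)
    (hV_nonneg : ∀ k ω, 0 ≤ V k ω)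
    (hV_int : ∀ k, Integrable (V k) μ)
    (hV_adapted : Adapted ℱ V)
    (γ c : ℝ) (hγ : γ ∈ Set.Ioo (0 : ℝ) 1) (hc : 0 ≤ c)
    (hdrift : ∀ k, μ[V (k + 1) | ℱ k] ≤ᵐ[μ] fun ω => γ * V k ω + c)
    (α : ℝ) (hα : 0 < α) (hαγ : Real.exp (2 * α) * γ < 1) :
    ∃ M₀ > (0 : ℝ), ∃ C > (0 : ℝ), ∀ M ≥ M₀,
      (∀ᵐ ω ∂μ, ∃ k : ℕ, V k ω ≤ M) ∧
      ∫ ω, Real.exp (α * (sInf {k : ℕ | V k ω ≤ M} : ℕ)) ∂μ ≤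
        C * (1 + ∫ ω, V 0 ω ∂μ) := by
  obtain ⟨hγ0, hγ1⟩ := hγ
  set ρ : ℝ := Real.exp (-(2 * α)) with hρdef
  have hρ0 : 0 < ρ := Real.exp_pos _
  have hρ1 : ρ < 1 := Real.exp_lt_one_iff.mpr (by linarith)
  have hρe : ρ * Real.exp (2 * α) = 1 := by
    rw [hρdef, ← Real.exp_add]; simp
  have hγρ : γ < ρ := by nlinarith [Real.exp_pos (2 * α)]
  set d : ℝ := ρ - γ with hddef
  have hd : 0 < d := by linarith
  have hex1 : Real.exp (-α) < 1 := Real.exp_lt_one_iff.mpr (by linarith)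
  have hex0 : 0 < Real.exp (-α) := Real.exp_pos _
  set K : ℝ := Real.exp α * (1 - Real.exp (-α))⁻¹ with hKdef
  have hK0 : 0 < K := mul_pos (Real.exp_pos _) (inv_pos.mpr (by linarith))
  refine ⟨max 1 (c / d), lt_of_lt_of_le one_pos (le_max_left _ _), 1 + K,
    by linarith, fun M hM => ?_⟩
  have hM1 : (1 : ℝ) ≤ M := le_trans (le_max_left _ _) hM
  have hM0 : (0 : ℝ) < M := lt_of_lt_of_le one_pos hM1
  have hMd : c / M ≤ d := by
    have h := le_trans (le_max_right 1 (c / d)) hM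
    rw [div_le_iff₀ hd] at h
    rw [div_le_iff₀ hM0]
    linarith
  -- basic measurability
  have hVm : ∀ k, Measurable (V k) := fun k =>
    (hV_adapted k).mono (ℱ.le k) le_rfl
  set S : ℕ → Set Ω := fun k => {ω | V k ω ≤ M} with hSdef
  have hSmeas : ∀ k, MeasurableSet (S k) := fun k =>
    measurableSet_le (hVm k) measurable_const
  set A : ℕ → Set Ω := fun n => {ω | ∀ j < n, M < V j ω} with hAdef
  have hAmeas : ∀ n, MeasurableSet (A n) := by
    intro n
    have : A n = ⋂ (j) (_ : j < n), {ω | M < V j ω} := by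
      ext ω; simp [hAdef]
    rw [this]
    exact MeasurableSet.iInter fun j => MeasurableSet.iInter fun _ =>
      measurableSet_lt measurable_const (hVm j)
  have hAmeasF : ∀ k, MeasurableSet[ℱ k] (A (k + 1)) := by
    intro k
    have : A (k + 1) = ⋂ (j) (_ : j < k + 1), {ω | M < V j ω} := by
      ext ω; simp [hAdef]
    rw [this]
    refine MeasurableSet.iInter fun j => MeasurableSet.iInter fun hj => ?_
    exact (ℱ.mono (Nat.lt_succ_iff.mp hj)) _
      (measurableSet_lt measurable_const (hV_adapted j))
  have hAsub : ∀ n, A (n + 1) ⊆ A n := fun n ω hω j hj => hω j (hj.trans (Nat.lt_succ_self n))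
  set a : ℕ → ℝ := fun k => ∫ ω in A k, V k ω ∂μ with hadef
  have ha_nonneg : ∀ k, 0 ≤ a k := fun k =>
    setIntegral_nonneg (hAmeas k) fun ω _ => hV_nonneg k ω
  have ha0 : a 0 = ∫ ω, V 0 ω ∂μ := by
    have : A 0 = Set.univ := by ext ω; simp [hAdef]
    rw [hadef]; simp only [this, Measure.restrict_univ]
  -- measure bound
  have hμA : ∀ k, M * (μ (A (k + 1))).toReal ≤ ∫ ω in A (k + 1), V k ω ∂μ := by
    intro k
    refine setIntegral_ge_of_const_le_real (hAmeas _) (measure_ne_top μ _)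
      (fun ω hω => (hω k (Nat.lt_succ_self k)).le) (hV_int k).integrableOn
  have hsubint : ∀ k, ∫ ω in A (k + 1), V k ω ∂μ ≤ a k := by
    intro k
    exact setIntegral_mono_set (hV_int k).integrableOn
      (ae_of_all _ fun ω => hV_nonneg k ω) (ae_of_all _ (hAsub k))
  -- the recursion
  have hrec : ∀ k, a (k + 1) ≤ ρ * a k := by
    intro k
    have h1 : a (k + 1) = ∫ ω in A (k + 1), (μ[V (k + 1) | ℱ k]) ω ∂μ :=
      (setIntegral_condExp (ℱ.le k) (hV_int (k + 1)) (hAmeasF k)).symm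
    have h2 : ∫ ω in A (k + 1), (μ[V (k + 1) | ℱ k]) ω ∂μ ≤
        ∫ ω in A (k + 1), (γ * V k ω + c) ∂μ :=
      setIntegral_mono_ae integrable_condExp.integrableOn
        (((hV_int k).const_mul γ).add (integrable_const c)).integrableOn (hdrift k)
    have h3 : ∫ ω in A (k + 1), (γ * V k ω + c) ∂μ =
        γ * ∫ ω in A (k + 1), V k ω ∂μ + c * (μ (A (k + 1))).toReal := by
      rw [integral_add ((hV_int k).const_mul γ).integrableOn (integrableOn_const (measure_ne_top _ _)),
        integral_const_mul, setIntegral_const, smul_eq_mul, measureReal_def]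
      ring
    have h4 : c * (μ (A (k + 1))).toReal ≤ (c / M) * a k := by
      have h5 : (μ (A (k + 1))).toReal ≤ a k / M := by
        rw [le_div_iff₀ hM0, mul_comm]
        exact le_trans (hμA k) (hsubint k)
      calc c * (μ (A (k + 1))).toReal ≤ c * (a k / M) :=
        mul_le_mul_of_nonneg_left h5 hc
      _ = (c / M) * a k := by ring
    calc a (k + 1) ≤ γ * ∫ ω in A (k + 1), V k ω ∂μ + c * (μ (A (k + 1))).toReal := by
          rw [h1]; exact le_trans h2 (le_of_eq h3)
    _ ≤ γ * a k + (c / M) * a k := add_le_add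
        (mul_le_mul_of_nonneg_left (hsubint k) hγ0.le) h4
    _ = (γ + c / M) * a k := by ring
    _ ≤ ρ * a k := mul_le_mul_of_nonneg_right (by linarith) (ha_nonneg k)
  have hak : ∀ k, a k ≤ ρ ^ k * a 0 := by
    intro k
    induction k with
    | zero => simp
    | succ n ih =>
      calc a (n + 1) ≤ ρ * a n := hrec n
      _ ≤ ρ * (ρ ^ n * a 0) := mul_le_mul_of_nonneg_left ih hρ0.le
      _ = ρ ^ (n + 1) * a 0 := by ring
  have hμAk : ∀ k, (μ (A (k + 1))).toReal ≤ ρ ^ k * a 0 := by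
    intro k
    have h5 : (μ (A (k + 1))).toReal ≤ a k := by
      have := le_trans (hμA k) (hsubint k)
      nlinarith [ENNReal.toReal_nonneg (a := μ (A (k + 1)))]
    exact le_trans h5 (hak k)
  -- a.s. finiteness
  have hN : μ (⋂ n, A n) = 0 := by
    have hle : ∀ k, (μ (⋂ n, A n)).toReal ≤ ρ ^ k * a 0 := by
      intro k
      refine le_trans ?_ (hμAk k)
      exact ENNReal.toReal_mono (measure_ne_top _ _) (measure_mono (Set.iInter_subset _ _))
    have htend : Filter.Tendsto (fun k => ρ ^ k * a 0) Filter.atTop (nhds 0) := by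
      have := (tendsto_pow_atTop_nhds_zero_of_lt_one hρ0.le hρ1).mul_const (a 0)
      simpa using this
    have h0 : (μ (⋂ n, A n)).toReal ≤ 0 := ge_of_tendsto htend (Filter.Eventually.of_forall hle)
    have : (μ (⋂ n, A n)).toReal = 0 := le_antisymm h0 ENNReal.toReal_nonneg
    rwa [ENNReal.toReal_eq_zero_iff, or_iff_left (measure_ne_top _ _)] at this
  have hfin : ∀ᵐ ω ∂μ, ∃ k : ℕ, V k ω ≤ M := by
    rw [ae_iff]
    refine measure_mono_null ?_ hN
    intro ω hω
    simp only [Set.mem_setOf_eq, not_exists, not_le] at hω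
    exact Set.mem_iInter.mpr fun n j _ => hω j
  refine ⟨hfin, ?_⟩
  -- the stopping time
  set τ : Ω → ℕ := fun ω => sInf {k | V k ω ≤ M} with hτdef
  have hτA : ∀ n, τ ⁻¹' {n} ⊆ A n := by
    intro n ω hω j hj
    have : j ∉ {k | V k ω ≤ M} := Nat.notMem_of_lt_sInf (by rw [show sInf {k | V k ω ≤ M} = τ ω from rfl, hω]; exact hj)
    simpa [not_le] using this
  have hτ0 : τ ⁻¹' {0} = S 0 ∪ ⋂ k, (S k)ᶜ := by
    ext ω
    simp only [Set.mem_preimage, Set.mem_singleton_iff, hτdef, Nat.sInf_eq_zero,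
      Set.mem_union, Set.mem_iInter, Set.mem_compl_iff, hSdef, Set.mem_setOf_eq,
      Set.eq_empty_iff_forall_notMem]
  have hτn : ∀ n : ℕ, τ ⁻¹' {n + 1} = A (n + 1) ∩ S (n + 1) := by
    intro n
    ext ω
    simp only [Set.mem_preimage, Set.mem_singleton_iff, Set.mem_inter_iff, hAdef, hSdef,
      Set.mem_setOf_eq]
    constructor
    · intro h
      have hne : {k | V k ω ≤ M}.Nonempty := by
        by_contra hemp
        rw [Set.not_nonempty_iff_eq_empty] at hemp
        rw [hτdef] at h
        simp only [hemp, Nat.sInf_empty] at h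
        exact Nat.succ_ne_zero n h.symm
      constructor
      · intro j hj
        have : j ∉ {k | V k ω ≤ M} := Nat.notMem_of_lt_sInf (by rw [show sInf {k | V k ω ≤ M} = τ ω from rfl, h]; exact hj)
        simpa [not_le] using this
      · have := Nat.sInf_mem hne
        rw [show sInf {k | V k ω ≤ M} = τ ω from rfl, h] at this
        exact this
    · rintro ⟨hA', hS'⟩
      refine le_antisymm (Nat.sInf_le hS') ?_
      by_contra hlt
      push_neg at hlt
      have hmem := Nat.sInf_mem (⟨n + 1, hS'⟩ : {k | V k ω ≤ M}.Nonempty)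
      exact absurd hmem (by simpa [not_le] using hA' _ hlt)
  have hτmeas : Measurable τ := by
    refine measurable_to_countable' fun n => ?_
    cases n with
    | zero =>
      rw [hτ0]
      exact (hSmeas 0).union (MeasurableSet.iInter fun k => (hSmeas k).compl)
    | succ n =>
      rw [hτn]
      exact (hAmeas _).inter (hSmeas _)
  -- the integral bound
  have hfmeas : Measurable fun ω => Real.exp (α * (τ ω : ℝ)) :=
    (measurable_from_nat (f := fun n : ℕ => Real.exp (α * (n : ℝ)))).comp hτmeas
  have hint_eq : ∫ ω, Real.exp (α * (sInf {k : ℕ | V k ω ≤ M} : ℕ)) ∂μ =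
      (∫⁻ ω, ENNReal.ofReal (Real.exp (α * (τ ω : ℝ))) ∂μ).toReal := by
    exact integral_eq_lintegral_of_nonneg_ae
      (ae_of_all _ fun ω => (Real.exp_pos _).le) hfmeas.aestronglyMeasurable
  rw [hint_eq]
  -- compute the lintegral as a sum
  have hlint : (∫⁻ ω, ENNReal.ofReal (Real.exp (α * (τ ω : ℝ))) ∂μ) =
      ∑' n : ℕ, ENNReal.ofReal (Real.exp (α * (n : ℝ))) * μ (τ ⁻¹' {n}) := by
    rw [← lintegral_map (f := fun n : ℕ => ENNReal.ofReal (Real.exp (α * (n : ℝ))))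
      measurable_from_nat hτmeas, lintegral_countable']
    congr 1
    ext n
    rw [Measure.map_apply hτmeas (measurableSet_singleton n)]
  rw [hlint]
  -- bound the sum
  have hsum_le : ∑' n : ℕ, ENNReal.ofReal (Real.exp (α * (n : ℝ))) * μ (τ ⁻¹' {n}) ≤
      ENNReal.ofReal (1 + K * a 0) := by
    rw [tsum_eq_zero_add' ENNReal.summable]
    have hterm : ∀ k : ℕ, ENNReal.ofReal (Real.exp (α * ((k + 1 : ℕ) : ℝ))) * μ (τ ⁻¹' {k + 1}) ≤
        ENNReal.ofReal (Real.exp α * a 0) * ENNReal.ofReal (Real.exp (-α)) ^ k := by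
      intro k
      calc ENNReal.ofReal (Real.exp (α * ((k + 1 : ℕ) : ℝ))) * μ (τ ⁻¹' {k + 1})
          ≤ ENNReal.ofReal (Real.exp (α * ((k + 1 : ℕ) : ℝ))) * μ (A (k + 1)) :=
            mul_le_mul_right (measure_mono (hτA (k + 1))) _
        _ = ENNReal.ofReal (Real.exp (α * ((k + 1 : ℕ) : ℝ))) *
            ENNReal.ofReal ((μ (A (k + 1))).toReal) := by
            rw [ENNReal.ofReal_toReal (measure_ne_top _ _)]
        _ ≤ ENNReal.ofReal (Real.exp (α * ((k + 1 : ℕ) : ℝ))) *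
            ENNReal.ofReal (ρ ^ k * a 0) :=
            mul_le_mul_right (ENNReal.ofReal_le_ofReal (hμAk k)) _
        _ = ENNReal.ofReal (Real.exp (α * ((k + 1 : ℕ) : ℝ)) * (ρ ^ k * a 0)) := by
            rw [← ENNReal.ofReal_mul (Real.exp_pos _).le]
        _ = ENNReal.ofReal (Real.exp α * a 0) * ENNReal.ofReal (Real.exp (-α)) ^ k := by
            rw [← ENNReal.ofReal_pow hex0.le, ← ENNReal.ofReal_mul
              (mul_nonneg (Real.exp_pos α).le (ha_nonneg 0))]
            congr 1
            have e1 : ρ ^ k = Real.exp ((k : ℝ) * (-(2 * α))) := by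
              rw [Real.exp_nat_mul, hρdef]
            have e2 : Real.exp (-α) ^ k = Real.exp ((k : ℝ) * (-α)) := by
              rw [Real.exp_nat_mul]
            have e3 : Real.exp (α * ((k + 1 : ℕ) : ℝ)) * Real.exp ((k : ℝ) * (-(2 * α)))
                = Real.exp α * Real.exp ((k : ℝ) * (-α)) := by
              rw [← Real.exp_add, ← Real.exp_add]
              congr 1
              push_cast
              ring
            calc Real.exp (α * ((k + 1 : ℕ) : ℝ)) * (ρ ^ k * a 0)
                = (Real.exp (α * ((k + 1 : ℕ) : ℝ)) * Real.exp ((k : ℝ) * (-(2 * α)))) * a 0 := by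
                  rw [e1]; ring
              _ = (Real.exp α * Real.exp ((k : ℝ) * (-α))) * a 0 := by rw [e3]
              _ = Real.exp α * a 0 * Real.exp (-α) ^ k := by rw [e2]; ring
    calc ENNReal.ofReal (Real.exp (α * ((0 : ℕ) : ℝ))) * μ (τ ⁻¹' {0}) +
        ∑' k : ℕ, ENNReal.ofReal (Real.exp (α * ((k + 1 : ℕ) : ℝ))) * μ (τ ⁻¹' {k + 1})
        ≤ 1 + ENNReal.ofReal (Real.exp α * a 0) * ∑' k : ℕ, ENNReal.ofReal (Real.exp (-α)) ^ k := by
          refine add_le_add ?_ ?_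
          · simp only [Nat.cast_zero, mul_zero, Real.exp_zero, ENNReal.ofReal_one, one_mul]
            exact prob_le_one
          · rw [← ENNReal.tsum_mul_left]
            exact ENNReal.tsum_le_tsum hterm
      _ = 1 + ENNReal.ofReal (Real.exp α * a 0) * ENNReal.ofReal ((1 - Real.exp (-α))⁻¹) := by
          rw [ENNReal.tsum_geometric]
          congr 1
          rw [← ENNReal.ofReal_one, ← ENNReal.ofReal_sub _ hex0.le,
            ENNReal.ofReal_inv_of_pos (by linarith)]
      _ = ENNReal.ofReal (1 + K * a 0) := by
          rw [← ENNReal.ofReal_mul (mul_nonneg (Real.exp_pos α).le (ha_nonneg 0)),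
            show Real.exp α * a 0 * (1 - Real.exp (-α))⁻¹ = K * a 0 by rw [hKdef]; ring,
            ← ENNReal.ofReal_one,
            ← ENNReal.ofReal_add (by norm_num) (mul_nonneg hK0.le (ha_nonneg 0))]
  calc (∑' n : ℕ, ENNReal.ofReal (Real.exp (α * (n : ℝ))) * μ (τ ⁻¹' {n})).toReal
      ≤ (ENNReal.ofReal (1 + K * a 0)).toReal :=
        ENNReal.toReal_mono ENNReal.ofReal_ne_top hsum_le
    _ = 1 + K * a 0 := ENNReal.toReal_ofReal (by nlinarith [hK0, ha_nonneg 0])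
    _ ≤ (1 + K) * (1 + ∫ ω, V 0 ω ∂μ) := by
        rw [← ha0]
        nlinarith [ha_nonneg 0, hK0]
end

section
/- Let H be a Polish space with its Borel σ-algebra and let (P_{s,t})_{s ≤ t, s,t ∈ ℝ} be a two-parameter family of Markov kernels on H satisfying the Chapman–Kolmogorov property. Let (μ_t)_{t ∈ ℝ} be a family of probability measures on H such that: (a) for every s ∈ ℝ, the map t ↦ μ_s.bind P_{s,t} from [s,∞) to the space of probability measures on H is continuous for the topology of weak convergence; (b) for Lebesgue-almost every s ∈ ℝ and then Lebesgue-almost every t ≥ s, μ_s.bind P_{s,t} = μ_t. Then there exists a family (μ̃_t)_{t ∈ ℝ} of probability measures on H such that μ̃_t = μ_t for Lebesgue-almost every t ∈ ℝ and μ̃_s.bind P_{s,t} = μ̃_t for ALL s ≤ t. -/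
open MeasureTheory ProbabilityTheory Filter Topology

lemma aux_ext_bcf {Ω : Type*} [MeasurableSpace Ω] [TopologicalSpace Ω]
    [TopologicalSpace.PseudoMetrizableSpace Ω] [BorelSpace Ω]
    (μ ν : Measure Ω) [IsFiniteMeasure μ] [IsFiniteMeasure ν]
    (h : ∀ f : BoundedContinuousFunction Ω ℝ, ∫ x, f x ∂μ = ∫ x, f x ∂ν) : μ = ν := by
  apply ext_of_forall_lintegral_eq_of_IsFiniteMeasure
  intro f
  have hμ := BoundedContinuousFunction.lintegral_lt_top_of_nnreal μ f
  have hν := BoundedContinuousFunction.lintegral_lt_top_of_nnreal ν f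
  rw [← ENNReal.toReal_eq_toReal_iff' hμ.ne hν.ne,
    BoundedContinuousFunction.toReal_lintegral_coe_eq_integral,
    BoundedContinuousFunction.toReal_lintegral_coe_eq_integral]
  exact h (BoundedContinuousFunction.comp _ isometry_subtype_coe.lipschitz f)

lemma aux_eqOn {a : ℝ} {f g : ℝ → ℝ}
    (hf : ContinuousOn f (Set.Ici a)) (hg : ContinuousOn g (Set.Ici a))
    (h : ∀ᵐ t ∂((volume : Measure ℝ).restrict (Set.Ici a)), f t = g t) :
    ∀ t ∈ Set.Ici a, f t = g t := by
  have hnull : volume ({t | ¬ f t = g t} ∩ Set.Ici a) = 0 := by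
    rw [← Measure.restrict_apply' measurableSet_Ici]
    exact ae_iff.mp h
  intro t ht
  set E := {x | x ∈ Set.Ici a ∧ f x = g x} with hE
  have htE : t ∈ closure E := by
    rw [mem_closure_iff]
    intro U hU htU
    by_contra hempty
    rw [Set.not_nonempty_iff_eq_empty] at hempty
    obtain ⟨ε, hε, hball⟩ := Metric.isOpen_iff.mp hU t htU
    have hsub : Set.Ico t (t + ε) ⊆ {x | ¬ f x = g x} ∩ Set.Ici a := by
      intro x hx
      have hxU : x ∈ U := by
        apply hball
        rw [Real.ball_eq_Ioo]
        exact ⟨by linarith [hx.1], hx.2⟩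
      have hxa : x ∈ Set.Ici a := le_trans ht hx.1
      refine ⟨fun heq => ?_, hxa⟩
      have : x ∈ U ∩ E := ⟨hxU, hxa, heq⟩
      rw [hempty] at this
      exact this
    have h0 : volume (Set.Ico t (t + ε)) = 0 := measure_mono_null hsub hnull
    rw [Real.volume_Ico] at h0
    simp only [add_sub_cancel_left] at h0
    exact absurd h0 (by simp [hε.ne', ENNReal.ofReal_eq_zero, not_le, hε])
  have hne : (𝓝[E] t).NeBot := mem_closure_iff_nhdsWithin_neBot.mp htE
  have hEsub : E ⊆ Set.Ici a := fun x hx => hx.1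
  have h1 : Tendsto f (𝓝[E] t) (𝓝 (f t)) := (hf t ht).mono_left (nhdsWithin_mono t hEsub)
  have h2 : Tendsto g (𝓝[E] t) (𝓝 (g t)) := (hg t ht).mono_left (nhdsWithin_mono t hEsub)
  have h1' : Tendsto f (𝓝[E] t) (𝓝 (g t)) :=
    h2.congr' (eventually_mem_nhdsWithin.mono fun x hx => hx.2.symm)
  exact tendsto_nhds_unique h1 h1'

lemma aux_prob_bind {α β : Type*} [MeasurableSpace α] [MeasurableSpace β]
    (m : Measure α) [IsProbabilityMeasure m] (κ : ProbabilityTheory.Kernel α β)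
    [IsMarkovKernel κ] : IsProbabilityMeasure (m.bind ⇑κ) := by
  constructor
  rw [Measure.bind_apply MeasurableSet.univ κ.measurable.aemeasurable]
  simp


/-- The modification argument in the proof of Theorem 3.2: if `(μ_t)` satisfies the
evolutionary relation for almost every `s` and then almost every `t ≥ s`, and the
evolved measures depend weakly continuously on `t`, then there is a modification
`(μ̃_t)`, equal to `(μ_t)` for almost every `t`, which satisfies the evolutionary
relation for ALL `s ≤ t`.  Weak continuity is expressed by testing against all
bounded continuous functions. -/
theorem modification_evolutionary_system
    {H : Type*} [TopologicalSpace H] [PolishSpace H]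
    [MeasurableSpace H] [BorelSpace H]
    (P : ℝ → ℝ → Kernel H H) [∀ s t, IsMarkovKernel (P s t)]
    (hCK : ∀ s r t : ℝ, s ≤ r → r ≤ t → ∀ x : H,
      P s t x = (P s r x).bind ⇑(P r t))
    (μ : ℝ → Measure H) (hμprob : ∀ t, IsProbabilityMeasure (μ t))
    (hcont : ∀ s : ℝ, ∀ f : BoundedContinuousFunction H ℝ,
      ContinuousOn (fun t => ∫ x, f x ∂((μ s).bind ⇑(P s t))) (Set.Ici s))
    (hae : ∀ᵐ s ∂(volume : Measure ℝ),
      ∀ᵐ t ∂((volume : Measure ℝ).restrict (Set.Ici s)),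
        (μ s).bind ⇑(P s t) = μ t) :
    ∃ μ' : ℝ → Measure H,
      (∀ t, IsProbabilityMeasure (μ' t)) ∧
      (∀ᵐ t ∂(volume : Measure ℝ), μ' t = μ t) ∧
      (∀ s t : ℝ, s ≤ t → (μ' s).bind ⇑(P s t) = μ' t) := by
  classical
  set S : Set ℝ := {s | ∀ᵐ t ∂((volume : Measure ℝ).restrict (Set.Ici s)),
      (μ s).bind ⇑(P s t) = μ t} with hSdef
  have hS : volume Sᶜ = 0 := ae_iff.mp hae
  have hex : ∀ c : ℝ, ∃ s, s ∈ S ∧ s < c := by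
    intro c
    by_contra h
    push_neg at h
    have hsub : Set.Iio c ⊆ Sᶜ := fun x hx hxS => absurd (h x hxS) (not_le.mpr hx)
    have := measure_mono_null hsub hS
    rw [Real.volume_Iio] at this
    exact ENNReal.top_ne_zero this
  have hex2 := hex
  choose g hgS hglt using hex
  haveI : ∀ a t : ℝ, IsProbabilityMeasure ((μ a).bind ⇑(P a t)) := fun a t =>
    aux_prob_bind (μ a) (P a t)
  -- consistency
  have key : ∀ a b t : ℝ, a ∈ S → b ∈ S → a ≤ b → b ≤ t →
      (μ a).bind ⇑(P a t) = (μ b).bind ⇑(P b t) := by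
    intro a b t haS hbS hab hbt
    apply aux_ext_bcf
    intro f
    have hF : ContinuousOn (fun t => ∫ x, f x ∂((μ a).bind ⇑(P a t))) (Set.Ici b) :=
      (hcont a f).mono (Set.Ici_subset_Ici.mpr hab)
    have hG := hcont b f
    have haer : ∀ᵐ r ∂((volume : Measure ℝ).restrict (Set.Ici b)),
        (μ a).bind ⇑(P a r) = μ r :=
      ae_restrict_of_ae_restrict_of_subset (Set.Ici_subset_Ici.mpr hab) haS
    have haeq : ∀ᵐ r ∂((volume : Measure ℝ).restrict (Set.Ici b)),
        (fun t => ∫ x, f x ∂((μ a).bind ⇑(P a t))) r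
          = (fun t => ∫ x, f x ∂((μ b).bind ⇑(P b t))) r := by
      filter_upwards [haer, hbS] with r h1 h2
      simp only [h1, h2]
    exact aux_eqOn hF hG haeq t hbt
  have key2 : ∀ a b t : ℝ, a ∈ S → b ∈ S → a ≤ t → b ≤ t →
      (μ a).bind ⇑(P a t) = (μ b).bind ⇑(P b t) := by
    intro a b t haS hbS hat hbt
    rcases le_total a b with hab | hba
    · exact key a b t haS hbS hab hbt
    · exact (key b a t hbS haS hba hat).symm
  set ν : ℝ → Measure H := fun t => (μ (g t)).bind ⇑(P (g t) t) with hν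
  refine ⟨ν, fun t => aux_prob_bind _ _, ?_, ?_⟩
  · -- a.e. equality
    choose a haS halt using fun n : ℕ => hex2 (-(n : ℝ))
    have hn : ∀ n : ℕ, volume ({t | ¬ ν t = μ t} ∩ Set.Ici (a n)) = 0 := by
      intro n
      rw [← Measure.restrict_apply' measurableSet_Ici]
      apply ae_iff.mp
      filter_upwards [haS n, ae_restrict_mem measurableSet_Ici] with t h1 h2
      show (μ (g t)).bind ⇑(P (g t) t) = μ t
      rw [key2 (g t) (a n) t (hgS t) (haS n) (hglt t).le h2]
      exact h1
    rw [ae_iff]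
    refine measure_mono_null (fun t ht => ?_) (measure_iUnion_null hn)
    · 
      obtain ⟨n, hnt⟩ := exists_nat_ge (-t)
      have : a n ≤ t := le_of_lt (lt_of_lt_of_le (halt n) (by linarith))
      exact Set.mem_iUnion.mpr ⟨n, ht, this⟩
  · -- evolutionary relation
    intro s t hst
    have hgs : g s < s := hglt s
    have h1 : (ν s).bind ⇑(P s t)
        = (μ (g s)).bind (fun x => (P (g s) s x).bind ⇑(P s t)) :=
      Measure.bind_bind (P (g s) s).measurable.aemeasurable (P s t).measurable.aemeasurable
    have h2 : (fun x => (P (g s) s x).bind ⇑(P s t)) = ⇑(P (g s) t) := by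
      funext x
      exact (hCK (g s) s t hgs.le hst x).symm
    rw [hν]
    show ((μ (g s)).bind ⇑(P (g s) s)).bind ⇑(P s t) = (μ (g t)).bind ⇑(P (g t) t)
    rw [h1, h2]
    exact key2 (g s) (g t) t (hgS s) (hgS t) (hgs.le.trans hst) (hglt t).le
end

section
/- Let H be a real normed space with its Borel σ-algebra, let (P_{s,t})_{s ≤ t, s,t ∈ ℝ} be a two-parameter family of Markov kernels on H, and let (μ_t)_{t ∈ ℝ} be probability measures on H with μ_s.bind P_{s,t} = μ_t for all s ≤ t. Assume there are constants c, γ > 0 such that for every bounded measurable φ : H → ℝ, all s ≤ t and all x, y ∈ H, |∫ φ d(P_{s,t}(x)) − ∫ φ d(P_{s,t}(y))| ≤ c ‖φ‖_∞ e^{−γ(t−s)} (1 + ‖x‖² + ‖y‖²). If for some s ∈ ℝ the second moment m_s := ∫ ‖y‖² dμ_s(y) is finite, then for all t ≥ s, all x ∈ H and every bounded measurable φ : H → ℝ, |∫ φ d(P_{s,t}(x)) − ∫ φ dμ_t| ≤ c ‖φ‖_∞ e^{−γ(t−s)} (1 + ‖x‖² + m_s). -/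
open MeasureTheory ProbabilityTheory

lemma integral_bind_markov_kernel
    {H : Type*} [MeasurableSpace H]
    (μ : Measure H) [IsProbabilityMeasure μ]
    (κ : Kernel H H) [IsMarkovKernel κ]
    (φ : H → ℝ) (hφ : Measurable φ) (B : ℝ) (hB0 : 0 ≤ B) (hB : ∀ z, |φ z| ≤ B) :
    ∫ z, φ z ∂(μ.bind ⇑κ) = ∫ y, ∫ z, φ z ∂(κ y) ∂μ := by
  -- integrability of φ wrt any probability measure
  have hint : ∀ (ν : Measure H), IsProbabilityMeasure ν → Integrable φ ν := by
    intro ν hν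
    exact Integrable.mono' (integrable_const B) hφ.aestronglyMeasurable
      (Filter.Eventually.of_forall fun z => (Real.norm_eq_abs _ ▸ hB z))
  set f₁ : H → ENNReal := fun z => ENNReal.ofReal (φ z) with hf₁
  set f₂ : H → ENNReal := fun z => ENNReal.ofReal (-φ z) with hf₂
  have hmf₁ : Measurable f₁ := hφ.ennreal_ofReal
  have hmf₂ : Measurable f₂ := hφ.neg.ennreal_ofReal
  have hκmeas : Measurable (⇑κ) := κ.measurable
  have hbindprob : IsProbabilityMeasure (μ.bind ⇑κ) := by
    constructor
    rw [Measure.bind_apply MeasurableSet.univ hκmeas.aemeasurable]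
    simp
  have hle : ∀ (g : H → ENNReal), Measurable g → (∀ z, g z ≤ ENNReal.ofReal B) →
      ∀ y, ∫⁻ z, g z ∂(κ y) ≤ ENNReal.ofReal B := by
    intro g hg hgB y
    calc ∫⁻ z, g z ∂(κ y) ≤ ∫⁻ _, ENNReal.ofReal B ∂(κ y) :=
          lintegral_mono fun z => hgB z
      _ = ENNReal.ofReal B := by simp
  have hleB₁ : ∀ z, f₁ z ≤ ENNReal.ofReal B := fun z =>
    ENNReal.ofReal_le_ofReal ((le_abs_self _).trans (hB z))
  have hleB₂ : ∀ z, f₂ z ≤ ENNReal.ofReal B := fun z =>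
    ENNReal.ofReal_le_ofReal ((neg_le_abs _).trans (hB z))
  -- expression of integrals via lintegrals
  have key : ∀ (ν : Measure H), IsProbabilityMeasure ν →
      ∫ z, φ z ∂ν = (∫⁻ z, f₁ z ∂ν).toReal - (∫⁻ z, f₂ z ∂ν).toReal := by
    intro ν hν
    exact integral_eq_lintegral_pos_part_sub_lintegral_neg_part (hint ν hν)
  rw [key _ hbindprob,
    Measure.lintegral_bind hκmeas.aemeasurable hmf₁.aemeasurable,
    Measure.lintegral_bind hκmeas.aemeasurable hmf₂.aemeasurable]
  -- now the right side
  have hmeas₁ : Measurable fun y => ∫⁻ z, f₁ z ∂(κ y) :=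
    Measurable.lintegral_kernel hmf₁
  have hmeas₂ : Measurable fun y => ∫⁻ z, f₂ z ∂(κ y) :=
    Measurable.lintegral_kernel hmf₂
  have hlt₁ : ∀ᵐ y ∂μ, (∫⁻ z, f₁ z ∂(κ y)) < ⊤ :=
    Filter.Eventually.of_forall fun y =>
      lt_of_le_of_lt (hle f₁ hmf₁ hleB₁ y) ENNReal.ofReal_lt_top
  have hlt₂ : ∀ᵐ y ∂μ, (∫⁻ z, f₂ z ∂(κ y)) < ⊤ :=
    Filter.Eventually.of_forall fun y =>
      lt_of_le_of_lt (hle f₂ hmf₂ hleB₂ y) ENNReal.ofReal_lt_top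
  have hint₁ : Integrable (fun y => (∫⁻ z, f₁ z ∂(κ y)).toReal) μ := by
    refine Integrable.mono' (integrable_const B) (hmeas₁.ennreal_toReal).aestronglyMeasurable
      (Filter.Eventually.of_forall fun y => ?_)
    rw [Real.norm_eq_abs, abs_of_nonneg ENNReal.toReal_nonneg]
    calc (∫⁻ z, f₁ z ∂(κ y)).toReal ≤ (ENNReal.ofReal B).toReal :=
          ENNReal.toReal_mono ENNReal.ofReal_ne_top (hle f₁ hmf₁ hleB₁ y)
      _ = B := ENNReal.toReal_ofReal hB0
  have hint₂ : Integrable (fun y => (∫⁻ z, f₂ z ∂(κ y)).toReal) μ := by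
    refine Integrable.mono' (integrable_const B) (hmeas₂.ennreal_toReal).aestronglyMeasurable
      (Filter.Eventually.of_forall fun y => ?_)
    rw [Real.norm_eq_abs, abs_of_nonneg ENNReal.toReal_nonneg]
    calc (∫⁻ z, f₂ z ∂(κ y)).toReal ≤ (ENNReal.ofReal B).toReal :=
          ENNReal.toReal_mono ENNReal.ofReal_ne_top (hle f₂ hmf₂ hleB₂ y)
      _ = B := ENNReal.toReal_ofReal hB0
  have hrhs : ∫ y, ∫ z, φ z ∂(κ y) ∂μ
      = ∫ y, ((∫⁻ z, f₁ z ∂(κ y)).toReal - (∫⁻ z, f₂ z ∂(κ y)).toReal) ∂μ := by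
    refine integral_congr_ae (Filter.Eventually.of_forall fun y => ?_)
    exact key (κ y) inferInstance
  rw [hrhs, integral_sub hint₁ hint₂, integral_toReal hmeas₁.aemeasurable hlt₁,
    integral_toReal hmeas₂.aemeasurable hlt₂]

/-- Estimate (6.9): an exponential mixing bound for the transition operators combined
with the evolutionary system relation yields exponential convergence of observables
to the evolutionary system of measures.  The supremum norm of a bounded measurable
`φ` is represented by quantifying over all uniform bounds `B`. -/
theorem exponential_convergence_to_evolutionary_system
    {H : Type*} [NormedAddCommGroup H] [MeasurableSpace H] [BorelSpace H]
    (P : ℝ → ℝ → Kernel H H) [∀ s t, IsMarkovKernel (P s t)]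
    (μ : ℝ → Measure H) (hμprob : ∀ t, IsProbabilityMeasure (μ t))
    (hμ : ∀ s t : ℝ, s ≤ t → (μ s).bind ⇑(P s t) = μ t)
    (c γ : ℝ) (hc : 0 < c) (hγ : 0 < γ)
    (hmix : ∀ φ : H → ℝ, Measurable φ → ∀ B : ℝ, (∀ x, |φ x| ≤ B) →
      ∀ s t : ℝ, s ≤ t → ∀ x y : H,
        |(∫ z, φ z ∂(P s t x)) - ∫ z, φ z ∂(P s t y)| ≤
          c * B * Real.exp (-γ * (t - s)) * (1 + ‖x‖ ^ 2 + ‖y‖ ^ 2))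
    (s : ℝ) (hms : Integrable (fun y => ‖y‖ ^ 2) (μ s)) :
    ∀ t : ℝ, s ≤ t → ∀ x : H, ∀ φ : H → ℝ, Measurable φ →
      ∀ B : ℝ, (∀ z, |φ z| ≤ B) →
      |(∫ z, φ z ∂(P s t x)) - ∫ z, φ z ∂(μ t)| ≤
        c * B * Real.exp (-γ * (t - s)) * (1 + ‖x‖ ^ 2 + ∫ y, ‖y‖ ^ 2 ∂(μ s)) := by
  intro t hst x φ hφ B hB
  haveI := hμprob s
  haveI := hμprob t
  have hB0 : 0 ≤ B := (abs_nonneg _).trans (hB 0)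
  -- rewrite ∫ φ dμ t via bind
  have hbind : ∫ z, φ z ∂(μ t) = ∫ y, ∫ z, φ z ∂(P s t y) ∂(μ s) := by
    rw [← hμ s t hst]
    exact integral_bind_markov_kernel (μ s) (P s t) φ hφ B hB0 hB
  set g : H → ℝ := fun y => (∫ z, φ z ∂(P s t x)) - ∫ z, φ z ∂(P s t y) with hg
  have hmeasI : StronglyMeasurable fun y => ∫ z, φ z ∂(P s t y) := by
    have : StronglyMeasurable fun p : H × H => φ p.2 :=
      (hφ.comp measurable_snd).stronglyMeasurable
    exact StronglyMeasurable.integral_kernel_prod_right'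
      (κ := P s t) (f := fun p : H × H => φ p.2) this
  have hgmeas : AEStronglyMeasurable g (μ s) :=
    (stronglyMeasurable_const.sub hmeasI).aestronglyMeasurable
  have hIbound : ∀ y : H, |∫ z, φ z ∂(P s t y)| ≤ B := by
    intro y
    calc |∫ z, φ z ∂(P s t y)| ≤ ∫ z, |φ z| ∂(P s t y) := by
          simpa [Real.norm_eq_abs] using
            norm_integral_le_integral_norm (μ := P s t y) φ
      _ ≤ ∫ _, B ∂(P s t y) := by
          refine integral_mono ?_ (integrable_const B) (fun z => hB z)
          exact Integrable.mono' (integrable_const B) hφ.abs.aestronglyMeasurable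
            (Filter.Eventually.of_forall fun z => by
              rw [Real.norm_eq_abs, abs_abs]; exact hB z)
      _ = B := by simp
  have hgint : Integrable g (μ s) := by
    refine Integrable.mono' (integrable_const (2 * B)) hgmeas
      (Filter.Eventually.of_forall fun y => ?_)
    rw [Real.norm_eq_abs]
    calc |g y| ≤ |∫ z, φ z ∂(P s t x)| + |∫ z, φ z ∂(P s t y)| := abs_sub _ _
      _ ≤ B + B := add_le_add (hIbound x) (hIbound y)
      _ = 2 * B := by ring
  have hboundint : Integrable
      (fun y => c * B * Real.exp (-γ * (t - s)) * (1 + ‖x‖ ^ 2 + ‖y‖ ^ 2)) (μ s) := by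
    apply Integrable.const_mul
    exact (Integrable.add (integrable_const _) hms)
  have hμconst : (∫ _ : H, (1 : ℝ) ∂(μ s)) = 1 := by simp
  calc |(∫ z, φ z ∂(P s t x)) - ∫ z, φ z ∂(μ t)|
      = |∫ y, g y ∂(μ s)| := by
        rw [hbind, hg]
        rw [integral_sub (integrable_const _) (by
          refine Integrable.mono' (integrable_const B) hmeasI.aestronglyMeasurable
            (Filter.Eventually.of_forall fun y => ?_)
          rw [Real.norm_eq_abs]; exact hIbound y)]
        simp
    _ ≤ ∫ y, |g y| ∂(μ s) := by
          simpa [Real.norm_eq_abs] using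
            norm_integral_le_integral_norm (μ := μ s) g
    _ ≤ ∫ y, c * B * Real.exp (-γ * (t - s)) * (1 + ‖x‖ ^ 2 + ‖y‖ ^ 2) ∂(μ s) := by
        refine integral_mono hgint.abs hboundint fun y => ?_
        exact hmix φ hφ B hB s t hst x y
    _ = c * B * Real.exp (-γ * (t - s)) * (1 + ‖x‖ ^ 2 + ∫ y, ‖y‖ ^ 2 ∂(μ s)) := by
        rw [integral_const_mul, integral_add (integrable_const _) hms]
        simp
end

section
/- Let H be a measurable space and let P be a Markov kernel on H such that for all x, y ∈ H the probability measures P(x) and P(y) are mutually absolutely continuous. Then: (1) every P-invariant probability measure μ is ergodic, i.e. every measurable set Γ ⊆ H with P(x)(Γ) = 1_Γ(x) for μ-almost every x satisfies μ(Γ) = 0 or μ(Γ) = 1; (2) P admits at most one invariant probability measure. -/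
open MeasureTheory ProbabilityTheory
open scoped ENNReal

/-- Doob-type argument underlying Theorem 4.3: if all the transition probabilities of
a Markov kernel `P` are mutually absolutely continuous, then (1) every invariant
probability measure is ergodic and (2) there is at most one invariant probability
measure. -/
theorem regular_kernel_ergodic_and_unique
    {H : Type*} [MeasurableSpace H]
    (P : Kernel H H) [IsMarkovKernel P]
    (hreg : ∀ x y : H, P x ≪ P y ∧ P y ≪ P x) :
    ((∀ μ : Measure H, IsProbabilityMeasure μ → μ.bind ⇑P = μ →
        ∀ Γ : Set H, MeasurableSet Γ →
          (∀ᵐ x ∂μ, P x Γ = Γ.indicator 1 x) →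
          μ Γ = 0 ∨ μ Γ = 1) ∧
      (∀ μ₁ μ₂ : Measure H, IsProbabilityMeasure μ₁ → IsProbabilityMeasure μ₂ →
        μ₁.bind ⇑P = μ₁ → μ₂.bind ⇑P = μ₂ → μ₁ = μ₂)) := by
  constructor
  · -- ergodicity
    intro μ hμ _hinv Γ hΓ hae
    by_contra h
    push_neg at h
    obtain ⟨h0, h1⟩ := h
    have hc : μ Γᶜ ≠ 0 := fun hc => h1 ((prob_compl_eq_zero_iff hΓ).mp hc)
    have hx : ∃ x, x ∈ Γ ∧ P x Γ = 1 := by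
      have h1' : ∀ᵐ x ∂μ.restrict Γ, P x Γ = Γ.indicator 1 x := ae_restrict_of_ae hae
      have h2' : ∀ᵐ x ∂μ.restrict Γ, x ∈ Γ := ae_restrict_mem hΓ
      have : (ae (μ.restrict Γ)).NeBot := ae_neBot.mpr (by rwa [Ne, Measure.restrict_eq_zero])
      obtain ⟨x, hx1, hx2⟩ := (h2'.and h1').exists
      exact ⟨x, hx1, by rwa [Set.indicator_of_mem hx1] at hx2⟩
    have hy : ∃ y, y ∉ Γ ∧ P y Γ = 0 := by
      have h1' : ∀ᵐ x ∂μ.restrict Γᶜ, P x Γ = Γ.indicator 1 x := ae_restrict_of_ae hae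
      have h2' : ∀ᵐ x ∂μ.restrict Γᶜ, x ∈ Γᶜ := ae_restrict_mem hΓ.compl
      have : (ae (μ.restrict Γᶜ)).NeBot := ae_neBot.mpr (by rwa [Ne, Measure.restrict_eq_zero])
      obtain ⟨y, hy1, hy2⟩ := (h2'.and h1').exists
      exact ⟨y, hy1, by rwa [Set.indicator_of_notMem hy1] at hy2⟩
    obtain ⟨x, _, hxP⟩ := hx
    obtain ⟨y, _, hyP⟩ := hy
    have : P x Γ = 0 := (hreg x y).1 hyP
    rw [hxP] at this
    exact one_ne_zero this
  · -- uniqueness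
    intro μ₁ μ₂ h₁ h₂ hinv₁ hinv₂
    by_contra hne
    obtain ⟨S, hS, hSin, hSout⟩ := hahn_decomposition (μ := μ₁) (ν := μ₂)
    -- restricted comparisons
    have le₁ : μ₂.restrict S ≤ μ₁.restrict S := by
      refine Measure.le_iff.mpr fun t ht => ?_
      rw [Measure.restrict_apply ht, Measure.restrict_apply ht]
      exact hSin _ (ht.inter hS) Set.inter_subset_right
    have le₂ : μ₁.restrict Sᶜ ≤ μ₂.restrict Sᶜ := by
      refine Measure.le_iff.mpr fun t ht => ?_
      rw [Measure.restrict_apply ht, Measure.restrict_apply ht]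
      exact hSout _ (ht.inter hS.compl) Set.inter_subset_right
    set ρ : Measure H := μ₁.restrict S - μ₂.restrict S with hρdef
    set τ : Measure H := μ₂.restrict Sᶜ - μ₁.restrict Sᶜ with hτdef
    have hρadd : ρ + μ₂.restrict S = μ₁.restrict S := Measure.sub_add_cancel_of_le le₁
    have hτadd : τ + μ₁.restrict Sᶜ = μ₂.restrict Sᶜ := Measure.sub_add_cancel_of_le le₂
    -- either both ρ, τ vanish (then μ₁ = μ₂) or both are nonzero
    have hStot : μ₂ S ≤ μ₁ S := hSin _ hS Set.Subset.rfl
    have hSctot : μ₁ Sᶜ ≤ μ₂ Sᶜ := hSout _ hS.compl Set.Subset.rfl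
    have hmass : μ₁ S + μ₁ Sᶜ = μ₂ S + μ₂ Sᶜ := by
      rw [measure_add_measure_compl hS, measure_add_measure_compl hS, measure_univ, measure_univ]
    have hρne : ρ ≠ 0 := by
      intro hρ0
      have e1 : μ₁.restrict S = μ₂.restrict S := by
        rw [← hρadd, hρ0, zero_add]
      have eS : μ₁ S = μ₂ S := by
        have := congrArg (fun m : Measure H => m Set.univ) e1
        simpa [Measure.restrict_apply_univ] using this
      have eSc : μ₁ Sᶜ = μ₂ Sᶜ := by
        rw [eS] at hmass
        exact (ENNReal.add_right_inj (measure_ne_top μ₂ S)).mp hmass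
      have hτ0 : τ = 0 := by
        have : τ Set.univ = 0 := by
          rw [hτdef, Measure.sub_apply MeasurableSet.univ le₂,
            Measure.restrict_apply_univ, Measure.restrict_apply_univ, eSc, tsub_self]
        exact Measure.measure_univ_eq_zero.mp this
      have e2 : μ₂.restrict Sᶜ = μ₁.restrict Sᶜ := by
        rw [← hτadd, hτ0, zero_add]
      exact hne (by
        rw [← Measure.restrict_add_restrict_compl (μ := μ₁) hS,
          ← Measure.restrict_add_restrict_compl (μ := μ₂) hS, e1, e2])
    have hτne : τ ≠ 0 := by
      intro hτ0
      have e2 : μ₂.restrict Sᶜ = μ₁.restrict Sᶜ := by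
        rw [← hτadd, hτ0, zero_add]
      have eSc : μ₁ Sᶜ = μ₂ Sᶜ := by
        have := congrArg (fun m : Measure H => m Set.univ) e2
        simpa [Measure.restrict_apply_univ] using this.symm
      have eS : μ₁ S = μ₂ S := by
        rw [eSc] at hmass
        exact (ENNReal.add_left_inj (measure_ne_top μ₂ Sᶜ)).mp hmass
      have hρ0 : ρ = 0 := by
        have : ρ Set.univ = 0 := by
          rw [hρdef, Measure.sub_apply MeasurableSet.univ le₁,
            Measure.restrict_apply_univ, Measure.restrict_apply_univ, eS, tsub_self]
        exact Measure.measure_univ_eq_zero.mp this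
      exact hρne hρ0
    -- the harmonic function g x = P x S
    set g : H → ℝ≥0∞ := fun x => P x S with hgdef
    have hgmeas : Measurable g := P.measurable_coe hS
    have hgle : ∀ x, g x ≤ 1 := fun x => prob_le_one
    have hint₁ : μ₁ S = ∫⁻ x, g x ∂μ₁ := by
      conv_lhs => rw [← hinv₁]
      rw [Measure.bind_apply hS P.measurable.aemeasurable]
    have hint₂ : μ₂ S = ∫⁻ x, g x ∂μ₂ := by
      conv_lhs => rw [← hinv₂]
      rw [Measure.bind_apply hS P.measurable.aemeasurable]
    -- decompose the integrals
    have hdec₁ : μ₁ = ρ + μ₂.restrict S + μ₁.restrict Sᶜ := by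
      rw [hρadd, Measure.restrict_add_restrict_compl hS]
    have hdec₂ : μ₂ = τ + μ₁.restrict Sᶜ + μ₂.restrict S := by
      rw [hτadd, add_comm, Measure.restrict_add_restrict_compl hS]
    set A : ℝ≥0∞ := ∫⁻ x, g x ∂(μ₂.restrict S) with hA
    set B : ℝ≥0∞ := ∫⁻ x, g x ∂(μ₁.restrict Sᶜ) with hB
    set R : ℝ≥0∞ := ∫⁻ x, g x ∂ρ with hR
    set T : ℝ≥0∞ := ∫⁻ x, g x ∂τ with hT
    have hE₁ : μ₁ S = R + A + B := by
      rw [hint₁]; conv_lhs => rw [hdec₁]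
      rw [lintegral_add_measure, lintegral_add_measure]
    have hE₂ : μ₂ S = T + B + A := by
      rw [hint₂]; conv_lhs => rw [hdec₂]
      rw [lintegral_add_measure, lintegral_add_measure]
    have hρuniv : ρ Set.univ = μ₁ S - μ₂ S := by
      rw [hρdef, Measure.sub_apply MeasurableSet.univ le₁,
        Measure.restrict_apply_univ, Measure.restrict_apply_univ]
    have hRle : R ≤ ρ Set.univ := by
      calc R ≤ ∫⁻ _, 1 ∂ρ := lintegral_mono hgle
      _ = ρ Set.univ := by simp
    -- finiteness facts
    have hSne : μ₁ S ≠ ⊤ := measure_ne_top _ _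
    have hS2ne : μ₂ S ≠ ⊤ := measure_ne_top _ _
    have hABne : A + B ≠ ⊤ := by
      have hA' : A ≤ μ₂ S := by
        calc A ≤ ∫⁻ _, 1 ∂(μ₂.restrict S) := lintegral_mono hgle
        _ = μ₂ S := by simp
      have hB' : B ≤ μ₁ Sᶜ := by
        calc B ≤ ∫⁻ _, 1 ∂(μ₁.restrict Sᶜ) := lintegral_mono hgle
        _ = μ₁ Sᶜ := by simp
      exact ENNReal.add_ne_top.mpr ⟨ne_top_of_le_ne_top hS2ne hA',
        ne_top_of_le_ne_top (measure_ne_top _ _) hB'⟩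
    have hρuf : ρ Set.univ ≠ ⊤ := by
      rw [hρuniv]; exact ne_top_of_le_ne_top hSne tsub_le_self
    -- μ₁ S = μ₂ S + ρ univ
    have hsplit : μ₁ S = μ₂ S + ρ Set.univ := by
      rw [hρuniv, add_tsub_cancel_of_le hStot]
    -- derive T = 0 and R = ρ univ
    have key : A + B + ρ Set.univ = A + B + (T + ρ Set.univ) := by
      have rhs_eq : μ₁ S = A + B + (T + ρ Set.univ) := by
        rw [hsplit, hE₂]; ring
      have lhs_ge : μ₁ S ≤ A + B + ρ Set.univ := by
        rw [hE₁]
        calc R + A + B ≤ ρ Set.univ + A + B :=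
              add_le_add_left (add_le_add_left hRle A) B
        _ = A + B + ρ Set.univ := by ring
      exact le_antisymm (add_le_add_right le_add_self (A + B)) (rhs_eq ▸ lhs_ge)
    have hT0 : T = 0 := by
      have h2 : ρ Set.univ = T + ρ Set.univ := (ENNReal.add_right_inj hABne).mp key
      have h3 : (0 : ℝ≥0∞) + ρ Set.univ = T + ρ Set.univ := by rwa [zero_add]
      exact ((ENNReal.add_left_inj hρuf).mp h3).symm
    have hRρ : R = ρ Set.univ := by
      have h4 : R + (A + B) = ρ Set.univ + (A + B) := by
        have h5 : μ₁ S = R + (A + B) := by rw [hE₁]; ring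
        rw [← h5, hsplit, hE₂, hT0]; ring
      exact (ENNReal.add_left_inj hABne).mp h4
    obtain ⟨x, hx0⟩ : ∃ x, g x = 0 := by
      have h6 : g =ᵐ[τ] 0 := (lintegral_eq_zero_iff hgmeas).mp (by rw [← hT, hT0])
      have hne : (ae τ).NeBot := ae_neBot.mpr hτne
      obtain ⟨z, hz⟩ := h6.exists
      exact ⟨z, hz⟩
    obtain ⟨y, hy1⟩ : ∃ y, (1 : ℝ≥0∞) - g y = 0 := by
      have hsub : ∫⁻ z, (1 - g z) ∂ρ = 0 := by
        rw [lintegral_sub hgmeas (by rw [← hR, hRρ]; exact hρuf)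
          (Filter.Eventually.of_forall hgle), lintegral_one, ← hR, hRρ, tsub_self]
      have hne : (ae ρ).NeBot := ae_neBot.mpr hρne
      obtain ⟨z, hz⟩ := ((lintegral_eq_zero_iff (measurable_const.sub hgmeas)).mp hsub).exists
      exact ⟨z, hz⟩
    have hgy : g y ≠ 0 := by
      intro h0; rw [h0, tsub_zero] at hy1; exact one_ne_zero hy1
    exact hgy ((hreg y x).1 hx0)
end

section
/- Let H be a measurable space, P a Markov kernel on H, μ¹ and μ² probability measures on H, and A ⊆ H a measurable set. For probability measures ρ¹, ρ² on H write d_TV(ρ¹, ρ²) = sup over measurable sets E ⊆ H of |ρ¹(E) − ρ²(E)|. Then d_TV(μ¹.bind P, μ².bind P) ≤ 1 − min(μ¹(A), μ²(A)) · (1 − sup_{y, z ∈ A} d_TV(P(y), P(z))). -/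
open MeasureTheory ProbabilityTheory

/-- The total variation distance between two measures, as the supremum over
measurable sets `E` of `|ρ₁(E) − ρ₂(E)|`. -/
noncomputable def dTV {H : Type*} [MeasurableSpace H] (ρ₁ ρ₂ : Measure H) : ℝ :=
  ⨆ E : {E : Set H // MeasurableSet E}, |(ρ₁ E.1).toReal - (ρ₂ E.1).toReal|

lemma dTV_nonneg {H : Type*} [MeasurableSpace H] (ρ₁ ρ₂ : Measure H) :
    0 ≤ dTV ρ₁ ρ₂ :=
  Real.iSup_nonneg fun _ => abs_nonneg _

lemma abs_term_le_one {H : Type*} [MeasurableSpace H] (ρ₁ ρ₂ : Measure H)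
    [IsProbabilityMeasure ρ₁] [IsProbabilityMeasure ρ₂] (E : Set H) :
    |(ρ₁ E).toReal - (ρ₂ E).toReal| ≤ 1 := by
  have h1 : (ρ₁ E).toReal ≤ 1 := by
    simpa using ENNReal.toReal_mono ENNReal.one_ne_top (prob_le_one (μ := ρ₁) (s := E))
  have h2 : (ρ₂ E).toReal ≤ 1 := by
    simpa using ENNReal.toReal_mono ENNReal.one_ne_top (prob_le_one (μ := ρ₂) (s := E))
  have h3 : 0 ≤ (ρ₁ E).toReal := ENNReal.toReal_nonneg
  have h4 : 0 ≤ (ρ₂ E).toReal := ENNReal.toReal_nonneg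
  rw [abs_le]; constructor <;> linarith

lemma dTV_le_one {H : Type*} [MeasurableSpace H] (ρ₁ ρ₂ : Measure H)
    [IsProbabilityMeasure ρ₁] [IsProbabilityMeasure ρ₂] :
    dTV ρ₁ ρ₂ ≤ 1 :=
  ciSup_le fun E => abs_term_le_one ρ₁ ρ₂ E.1

lemma abs_sub_le_dTV {H : Type*} [MeasurableSpace H] (ρ₁ ρ₂ : Measure H)
    [IsProbabilityMeasure ρ₁] [IsProbabilityMeasure ρ₂] {E : Set H}
    (hE : MeasurableSet E) :
    |(ρ₁ E).toReal - (ρ₂ E).toReal| ≤ dTV ρ₁ ρ₂ := by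
  have hbdd : BddAbove (Set.range fun E : {E : Set H // MeasurableSet E} =>
      |(ρ₁ E.1).toReal - (ρ₂ E.1).toReal|) := by
    refine ⟨1, ?_⟩
    rintro _ ⟨E, rfl⟩
    exact abs_term_le_one ρ₁ ρ₂ E.1
  exact le_ciSup hbdd (⟨E, hE⟩ : {E : Set H // MeasurableSet E})

lemma key_bound {H : Type*} [MeasurableSpace H]
    (P : Kernel H H) [IsMarkovKernel P]
    (μ ν : Measure H) [IsProbabilityMeasure μ] [IsProbabilityMeasure ν]
    (A : Set H) (hA : MeasurableSet A) {E : Set H} (hE : MeasurableSet E) :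
    ((μ.bind ⇑P) E).toReal - ((ν.bind ⇑P) E).toReal ≤
      1 - min (μ A).toReal (ν A).toReal *
        (1 - ⨆ (y : A) (z : A), dTV (P (y : H)) (P (z : H))) := by
  set D := ⨆ (y : A) (z : A), dTV (P (y : H)) (P (z : H)) with hD
  set a := (μ A).toReal with ha
  set b := (ν A).toReal with hb
  have ha0 : 0 ≤ a := ENNReal.toReal_nonneg
  have hb0 : 0 ≤ b := ENNReal.toReal_nonneg
  -- expressing the binds as integrals
  have hPmeas : Measurable fun y => P y E := P.measurable_coe hE
  have hint : ∀ (ρ : Measure H) [IsProbabilityMeasure ρ],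
      ((ρ.bind ⇑P) E).toReal = ∫ y, (P y E).toReal ∂ρ := by
    intro ρ _
    rw [Measure.bind_apply hE P.measurable.aemeasurable]
    rw [integral_toReal hPmeas.aemeasurable
      (Filter.Eventually.of_forall fun y => measure_lt_top _ _)]
  have hintegrable : ∀ (ρ : Measure H) [IsProbabilityMeasure ρ],
      Integrable (fun y => (P y E).toReal) ρ := by
    intro ρ _
    refine integrable_toReal_of_lintegral_ne_top hPmeas.aemeasurable ?_
    refine ne_of_lt (lt_of_le_of_lt (lintegral_mono fun y => prob_le_one) ?_)
    simp
  set f : H → ℝ := fun y => (P y E).toReal with hf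
  have hf0 : ∀ y, 0 ≤ f y := fun y => ENNReal.toReal_nonneg
  have hf1 : ∀ y, f y ≤ 1 := fun y => by
    simpa using ENNReal.toReal_mono ENNReal.one_ne_top (prob_le_one (μ := P y) (s := E))
  rw [hint μ, hint ν]
  by_cases hm : min a b = 0
  · -- trivial case
    rw [hm, zero_mul, sub_zero]
    have h1 : ∫ y, f y ∂μ ≤ 1 := by
      calc ∫ y, f y ∂μ ≤ ∫ _, (1:ℝ) ∂μ :=
            integral_mono (hintegrable μ) (integrable_const 1) hf1
        _ = 1 := by simp
    have h2 : 0 ≤ ∫ y, f y ∂ν := integral_nonneg hf0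
    linarith
  · have hmpos : 0 < min a b := lt_of_le_of_ne (le_min ha0 hb0) (Ne.symm hm)
    have hμA : μ A ≠ 0 := by
      intro h
      have ha' : a = 0 := by rw [ha, h, ENNReal.toReal_zero]
      have h' := min_le_left a b
      linarith
    have hAne : A.Nonempty := MeasureTheory.nonempty_of_measure_ne_zero hμA
    haveI : Nonempty A := hAne.to_subtype
    -- bounds on the double sup
    have bddin : ∀ y : A, BddAbove (Set.range fun z : A => dTV (P (y:H)) (P (z:H))) := by
      intro y
      refine ⟨1, ?_⟩
      rintro _ ⟨z, rfl⟩
      exact dTV_le_one _ _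
    have bddout : BddAbove (Set.range fun y : A => ⨆ z : A, dTV (P (y:H)) (P (z:H))) := by
      refine ⟨1, ?_⟩
      rintro _ ⟨y, rfl⟩
      exact ciSup_le fun z => dTV_le_one _ _
    have hle : ∀ y z : A, dTV (P (y:H)) (P (z:H)) ≤ D := fun y z =>
      le_trans (le_ciSup (bddin y) z) (le_ciSup bddout y)
    obtain ⟨y₀, hy₀⟩ := hAne
    have hDnn : 0 ≤ D := le_trans (dTV_nonneg _ _) (hle ⟨y₀, hy₀⟩ ⟨y₀, hy₀⟩)
    -- sup and inf of f over A
    set s := sSup (f '' A) with hsdef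
    set i := sInf (f '' A) with hidef
    have himg : (f '' A).Nonempty := ⟨f y₀, ⟨y₀, hy₀, rfl⟩⟩
    have hbddA : BddAbove (f '' A) := ⟨1, by rintro _ ⟨y, hy, rfl⟩; exact hf1 y⟩
    have hbddB : BddBelow (f '' A) := ⟨0, by rintro _ ⟨y, hy, rfl⟩; exact hf0 y⟩
    have hs1 : s ≤ 1 := csSup_le himg (by rintro _ ⟨y, hy, rfl⟩; exact hf1 y)
    have hi0 : 0 ≤ i := le_csInf himg (by rintro _ ⟨y, hy, rfl⟩; exact hf0 y)
    have hsi : s ≤ i + D := by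
      refine csSup_le himg ?_
      rintro _ ⟨y, hy, rfl⟩
      rw [← sub_le_iff_le_add]
      refine le_csInf himg ?_
      rintro _ ⟨z, hz, rfl⟩
      have h1 := abs_sub_le_dTV (P y) (P z) hE
      have h2 := hle ⟨y, hy⟩ ⟨z, hz⟩
      have h3 : f y - f z ≤ |f y - f z| := le_abs_self _
      simp only [hf] at h3 ⊢
      linarith [abs_sub_le_dTV (P y) (P z) hE]
    -- integral estimates
    have hsplit : ∀ (ρ : Measure H) [IsProbabilityMeasure ρ],
        ∫ y, f y ∂ρ = (∫ y in A, f y ∂ρ) + ∫ y in Aᶜ, f y ∂ρ := fun ρ _ =>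
      (integral_add_compl hA (hintegrable ρ)).symm
    have h2 : ∫ y in A, f y ∂μ ≤ a * s := by
      calc ∫ y in A, f y ∂μ ≤ ∫ _ in A, s ∂μ := by
            refine setIntegral_mono_on (hintegrable μ).integrableOn
              (integrableOn_const (measure_ne_top μ A)) hA ?_
            exact fun y hy => le_csSup hbddA ⟨y, hy, rfl⟩
        _ = a * s := by rw [setIntegral_const, smul_eq_mul]; rfl
    have h3 : ∫ y in Aᶜ, f y ∂μ ≤ 1 - a := by
      have hcompl : (μ Aᶜ).toReal = 1 - a := by
        rw [ha, prob_compl_eq_one_sub hA,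
          ENNReal.toReal_sub_of_le prob_le_one ENNReal.one_ne_top]
        simp
      calc ∫ y in Aᶜ, f y ∂μ ≤ ∫ _ in Aᶜ, (1:ℝ) ∂μ := by
            refine setIntegral_mono_on (hintegrable μ).integrableOn
              (integrableOn_const (measure_ne_top μ Aᶜ)) hA.compl ?_
            exact fun y _ => hf1 y
        _ = 1 - a := by rw [setIntegral_const, smul_eq_mul, mul_one]; exact hcompl
    have h4 : b * i ≤ ∫ y in A, f y ∂ν := by
      calc b * i = ∫ _ in A, i ∂ν := by rw [setIntegral_const, smul_eq_mul]; rfl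
        _ ≤ ∫ y in A, f y ∂ν := by
            refine setIntegral_mono_on (integrableOn_const (measure_ne_top ν A))
              (hintegrable ν).integrableOn hA ?_
            exact fun y hy => csInf_le hbddB ⟨y, hy, rfl⟩
    have h5 : (0:ℝ) ≤ ∫ y in Aᶜ, f y ∂ν := setIntegral_nonneg hA.compl fun y _ => hf0 y
    rw [hsplit μ, hsplit ν]
    rcases le_total a b with hab | hab
    · rw [min_eq_left hab]
      nlinarith [mul_le_mul_of_nonneg_left hsi ha0, mul_le_mul_of_nonneg_right hab hi0]
    · rw [min_eq_right hab]
      nlinarith [mul_le_mul_of_nonneg_left hsi hb0,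
        mul_le_mul_of_nonneg_left hs1 (sub_nonneg.2 hab)]

/-- The total variation instance of Lemma 5.6 (the limit case `d_n ↑ 1` of the
Wasserstein identity (5.4)):
`d_TV(μ¹P, μ²P) ≤ 1 − min(μ¹(A), μ²(A)) (1 − sup_{y,z ∈ A} d_TV(P(y), P(z)))`. -/
theorem dTV_bind_le
    {H : Type*} [MeasurableSpace H]
    (P : Kernel H H) [IsMarkovKernel P]
    (μ₁ μ₂ : Measure H) [IsProbabilityMeasure μ₁] [IsProbabilityMeasure μ₂]
    (A : Set H) (hA : MeasurableSet A) :
    dTV (μ₁.bind ⇑P) (μ₂.bind ⇑P) ≤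
      1 - min (μ₁ A).toReal (μ₂ A).toReal *
        (1 - ⨆ (y : A) (z : A), dTV (P (y : H)) (P (z : H))) := by
  refine ciSup_le fun E => ?_
  rw [abs_le]
  constructor
  · have := key_bound P μ₂ μ₁ A hA E.2
    rw [min_comm] at this
    linarith
  · exact key_bound P μ₁ μ₂ A hA E.2
end
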